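/- arXiv:1705.07351 — 17 statements merged into one kernel-verified Lean document; each statement's English description precedes it below -/
import Mathlib

section
/- Suppose the sound ranging problem has a solution (s', t') (so t i = t' + ‖r i − s'‖ for all i ∈ ℕ) and the dual problem also has a solution (s'', t'') (so t i = t'' − ‖r i − s''‖ for all i ∈ ℕ). Then the solution of the sound ranging problem is unique: for any pair (s, τ) with t i = τ + ‖r i − s‖ for all i ∈ ℕ, one has s = s' and τ = t'. -/
open RealInnerProductSpace

set_option maxHeartbeats 1000000 in
/-- If the sound ranging problem has a solution and the dual problem also has a
solution, then the solution of the sound ranging problem is unique. -/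
theorem srp_unique_of_dual_solution
    {H : Type*} [NormedAddCommGroup H] [InnerProductSpace ℝ H] [CompleteSpace H]
    (r : ℕ → H) (t : ℕ → ℝ)
    (hr0 : r 0 = 0) (ht0 : t 0 = 0)
    (hli : LinearIndependent ℝ (fun i : ℕ => r (i + 1)))
    (hdense : Dense (Submodule.span ℝ (Set.range fun i : ℕ => r (i + 1)) : Set H))
    (s' : H) (t' : ℝ) (hsol : ∀ i : ℕ, t i = t' + ‖r i - s'‖)
    (s'' : H) (t'' : ℝ) (hdual : ∀ i : ℕ, t i = t'' - ‖r i - s''‖) :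
    ∀ (s : H) (τ : ℝ), (∀ i : ℕ, t i = τ + ‖r i - s‖) → s = s' ∧ τ = t' := by
  -- density helper: a vector orthogonal to all sensors is zero
  have hdz : ∀ v : H, (∀ i : ℕ, ⟪r (i + 1), v⟫ = 0) → v = 0 := by
    intro v hv
    apply hdense.eq_zero_of_inner_right ℝ
    intro x hx
    refine Submodule.span_induction ?_ ?_ ?_ ?_ hx
    · rintro y ⟨i, rfl⟩; exact hv i
    · simp
    · intro a b _ _ ha hb; rw [inner_add_left, ha, hb]; ring
    · intro c a _ ha; rw [real_inner_smul_left, ha]; ring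
  have ht'' : t'' = ‖s''‖ := by
    have h0 := hdual 0
    rw [hr0, ht0, zero_sub, norm_neg] at h0
    linarith
  -- quadratic relation for any solution of the SRP
  have quadS : ∀ (x : H) (σ : ℝ), (∀ i : ℕ, t i = σ + ‖r i - x‖) → ∀ i : ℕ,
      ⟪r i, x⟫ + t i * ‖x‖ = (‖r i‖ ^ 2 - t i ^ 2) / 2 := by
    intro x σ hx i
    have hσ : σ = -‖x‖ := by
      have h0 := hx 0
      rw [hr0, ht0, zero_sub, norm_neg] at h0
      linarith
    have hi : ‖r i - x‖ = t i + ‖x‖ := by have := hx i; rw [hσ] at this; linarith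
    have hsq : ‖r i - x‖ ^ 2 = (t i + ‖x‖) ^ 2 := by rw [hi]
    rw [norm_sub_sq_real] at hsq
    nlinarith [hsq]
  -- quadratic relation for the dual solution
  have quadD : ∀ i : ℕ, ⟪r i, s''⟫ - t i * ‖s''‖ = (‖r i‖ ^ 2 - t i ^ 2) / 2 := by
    intro i
    have hi : ‖r i - s''‖ = ‖s''‖ - t i := by have := hdual i; rw [ht''] at this; linarith
    have hsq : ‖r i - s''‖ ^ 2 = (‖s''‖ - t i) ^ 2 := by rw [hi]
    rw [norm_sub_sq_real] at hsq
    nlinarith [hsq]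
  intro s τ hs
  have hτ : τ = -‖s‖ := by
    have h0 := hs 0
    rw [hr0, ht0, zero_sub, norm_neg] at h0
    linarith
  have ht' : t' = -‖s'‖ := by
    have h0 := hsol 0
    rw [hr0, ht0, zero_sub, norm_neg] at h0
    linarith
  have qs := quadS s τ hs
  have qs' := quadS s' t' hsol
  -- main claim: s = s'
  have hss' : s = s' := by
    by_cases hnorm : ‖s‖ = ‖s'‖
    · -- equal norms: direct density argument
      have hv : s - s' = 0 := by
        apply hdz
        intro i
        have h1 := qs (i + 1)
        have h2 := qs' (i + 1)
        rw [inner_sub_right]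
        rw [hnorm] at h1
        linarith
      exact sub_eq_zero.mp hv
    · exfalso
      have hd : ‖s‖ - ‖s'‖ ≠ 0 := sub_ne_zero.mpr hnorm
      set u : H := (-(‖s‖ - ‖s'‖)⁻¹) • (s - s') with hu
      -- t i = ⟪r i, u⟫
      have htu : ∀ i : ℕ, t i = ⟪r i, u⟫ := by
        intro i
        have h1 := qs i
        have h2 := qs' i
        have h3 : ⟪r i, s - s'⟫ = -(t i * (‖s‖ - ‖s'‖)) := by
          rw [inner_sub_right]; nlinarith [h1, h2]
        rw [hu, real_inner_smul_right, h3]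
        field_simp
      -- for any SRP solution x : x - s'' + (‖x‖ + ‖s''‖) • u = 0
      have key : ∀ (x : H), (∀ i : ℕ, ⟪r i, x⟫ + t i * ‖x‖ = (‖r i‖ ^ 2 - t i ^ 2) / 2) →
          x - s'' + (‖x‖ + ‖s''‖) • u = 0 := by
        intro x hx
        apply hdz
        intro i
        have h1 := hx (i + 1)
        have h2 := quadD (i + 1)
        have h3 := htu (i + 1)
        rw [inner_add_right, inner_sub_right, real_inner_smul_right, ← h3]
        linarith
      have k1 : s - s'' + (‖s‖ + ‖s''‖) • u = 0 := key s qs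
      have k2 : s' - s'' + (‖s'‖ + ‖s''‖) • u = 0 := key s' qs'
      -- hence s - s' = -((‖s‖-‖s'‖) • u), so ‖u‖ ≥ 1
      have h6 : s - s' + (‖s‖ - ‖s'‖) • u = 0 := by
        have e : s - s' + (‖s‖ - ‖s'‖) • u =
            (s - s'' + (‖s‖ + ‖s''‖) • u) - (s' - s'' + (‖s'‖ + ‖s''‖) • u) := by
          module
        rw [e, k1, k2, sub_zero]
      have hss : s - s' = -((‖s‖ - ‖s'‖) • u) := eq_neg_of_add_eq_zero_left h6
      have hu1 : 1 ≤ ‖u‖ := by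
        have htri : |‖s‖ - ‖s'‖| ≤ ‖s - s'‖ := abs_norm_sub_norm_le s s'
        have hns : ‖s - s'‖ = |‖s‖ - ‖s'‖| * ‖u‖ := by
          rw [hss, norm_neg, norm_smul, Real.norm_eq_abs]
        have hdpos : 0 < |‖s‖ - ‖s'‖| := abs_pos.mpr hd
        nlinarith [htri, hns, hdpos]
      -- rule out the degenerate case ‖s‖ + ‖s''‖ = 0
      rcases eq_or_lt_of_le (by positivity : (0:ℝ) ≤ ‖s‖ + ‖s''‖) with hab | hab
      · -- then s = 0 and s'' = 0, so r 1 = 0, contradiction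
        have hs0 : ‖s‖ = 0 := by nlinarith [norm_nonneg s, norm_nonneg s'']
        have hs''0 : ‖s''‖ = 0 := by nlinarith [norm_nonneg s, norm_nonneg s'']
        have e1 : t 1 = ‖r 1‖ := by
          have := hs 1
          rw [hτ, hs0, norm_eq_zero.mp hs0] at this
          simpa using this
        have e2 : t 1 = -‖r 1‖ := by
          have := hdual 1
          rw [ht'', hs''0, norm_eq_zero.mp hs''0] at this
          simpa using this
        have : r 1 = 0 := by
          have : ‖r 1‖ = 0 := by linarith
          exact norm_eq_zero.mp this
        exact hli.ne_zero 0 (by simpa using this)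
      · -- nondegenerate case
        have hnss : s - s'' = -((‖s‖ + ‖s''‖) • u) := eq_neg_of_add_eq_zero_left k1
        have hle : (‖s‖ + ‖s''‖) * ‖u‖ ≤ ‖s‖ + ‖s''‖ := by
          have h7 : ‖s - s''‖ = (‖s‖ + ‖s''‖) * ‖u‖ := by
            rw [hnss, norm_neg, norm_smul, Real.norm_eq_abs, abs_of_pos hab]
          have h8 : ‖s - s''‖ ≤ ‖s‖ + ‖s''‖ := norm_sub_le s s''
          linarith
        have hu2 : ‖u‖ ≤ 1 := by nlinarith [hle, hab]
        have hunorm : ‖u‖ = 1 := le_antisymm hu2 hu1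
        -- midpoint-type argument: let p := s + ‖s‖ • u; show p = 0
        set p : H := s + ‖s‖ • u with hp
        have hsp : s = p - ‖s‖ • u := by rw [hp]; abel
        have hs''p : s'' = p + ‖s''‖ • u := by
          have e1 : p + ‖s''‖ • u - s'' = s - s'' + (‖s‖ + ‖s''‖) • u := by
            rw [hp, add_smul]; abel
          rw [k1] at e1
          exact (sub_eq_zero.mp e1).symm
        have hp1 : ‖p‖ ^ 2 = 2 * ‖s‖ * ⟪p, u⟫ := by
          have e1 : ‖s‖ ^ 2 = ‖p - ‖s‖ • u‖ ^ 2 := by rw [← hsp]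
          rw [norm_sub_sq_real, real_inner_smul_right, norm_smul, Real.norm_eq_abs,
            abs_of_nonneg (norm_nonneg s), hunorm] at e1
          nlinarith [e1]
        have hp2 : ‖p‖ ^ 2 = -(2 * ‖s''‖ * ⟪p, u⟫) := by
          have e1 : ‖s''‖ ^ 2 = ‖p + ‖s''‖ • u‖ ^ 2 := by rw [← hs''p]
          rw [norm_add_sq_real, real_inner_smul_right, norm_smul, Real.norm_eq_abs,
            abs_of_nonneg (norm_nonneg s''), hunorm] at e1
          nlinarith [e1]
        have hpu : ⟪p, u⟫ = 0 := by nlinarith [hp1, hp2, hab, sq_nonneg ‖p‖]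
        have hpzero : p = 0 := by
          have : ‖p‖ ^ 2 = 0 := by rw [hp1, hpu]; ring
          have : ‖p‖ = 0 := by nlinarith [norm_nonneg p]
          exact norm_eq_zero.mp this
        have hs0 : s = -(‖s‖ • u) := by
          have : s + ‖s‖ • u = 0 := by rw [← hp, hpzero]
          exact eq_neg_of_add_eq_zero_left this
        -- then all sensors are multiples of u
        have hnu : ‖-(‖s‖ • u)‖ = ‖s‖ := by
          rw [norm_neg, norm_smul, Real.norm_eq_abs, abs_of_nonneg (norm_nonneg s), hunorm,
            mul_one]
        have hci : ∀ i : ℕ, ‖r i‖ ^ 2 = t i ^ 2 := by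
          intro i
          have h1 := qs i
          have h3 := htu i
          rw [hs0, hnu, inner_neg_right, real_inner_smul_right, ← h3] at h1
          nlinarith [h1]
        have hcol : ∀ i : ℕ, r i = t i • u := by
          intro i
          have e1 : ‖r i - t i • u‖ ^ 2 = 0 := by
            rw [norm_sub_sq_real, real_inner_smul_right, ← htu i, norm_smul, Real.norm_eq_abs,
              hunorm, mul_one, sq_abs]
            nlinarith [hci i]
          have : ‖r i - t i • u‖ = 0 := by nlinarith [norm_nonneg (r i - t i • u)]
          exact sub_eq_zero.mp (norm_eq_zero.mp this)
        -- contradiction with linear independence of r 1, r 2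
        have h1ne : r 1 ≠ 0 := by simpa using hli.ne_zero 0
        have ht1 : t 1 ≠ 0 := by
          intro h
          exact h1ne (by rw [hcol 1, h, zero_smul])
        have hpair := hli.comp (fun j : Fin 2 => (j : ℕ)) Fin.val_injective
        have hsum : ∑ j : Fin 2, (![t 2, -(t 1)]) j • (fun j : Fin 2 => r ((j : ℕ) + 1)) j
            = 0 := by
          simp only [Fin.sum_univ_two, Matrix.cons_val_zero, Matrix.cons_val_one,
            Matrix.head_cons, Fin.val_zero, Fin.val_one]
          rw [hcol 1, hcol 2]
          module
        have := Fintype.linearIndependent_iff.mp hpair ![t 2, -(t 1)] hsum 1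
        simp at this
        exact ht1 this
  refine ⟨hss', ?_⟩
  rw [hτ, ht', hss']
end

section
/- Suppose t i = ‖r i‖ for every i ∈ ℕ (i.e., the pair (0, 0): source at the sensor r 0 = 0 with emission time 0, is a solution of the sound ranging problem). Then this solution is unique: any pair (s, τ) with t i = τ + ‖r i − s‖ for all i ∈ ℕ satisfies s = 0 and τ = 0. -/
open RealInnerProductSpace

/-- If the source coincides with the sensor `r 0 = 0` (emission time `0`), this
solution of the sound ranging problem is unique. -/
theorem srp_unique_of_source_at_sensor
    {H : Type*} [NormedAddCommGroup H] [InnerProductSpace ℝ H] [CompleteSpace H]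
    (r : ℕ → H) (t : ℕ → ℝ)
    (hr0 : r 0 = 0) (ht0 : t 0 = 0)
    (hli : LinearIndependent ℝ (fun i : ℕ => r (i + 1)))
    (hdense : Dense (Submodule.span ℝ (Set.range fun i : ℕ => r (i + 1)) : Set H))
    (ht : ∀ i : ℕ, t i = ‖r i‖) :
    ∀ (s : H) (τ : ℝ), (∀ i : ℕ, t i = τ + ‖r i - s‖) → s = 0 ∧ τ = 0 := by
  intro s τ h
  have h0 := h 0
  rw [ht0, hr0, zero_sub, norm_neg] at h0
  -- τ = -‖s‖
  have hτ : τ = -‖s‖ := by linarith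
  have hs0 : s = 0 := by
    by_contra hs
    have hsn : ‖s‖ ≠ 0 := norm_ne_zero_iff.mpr hs
    -- for each i, ‖s‖ • r i = -(‖r i‖ • s)
    have key : ∀ i : ℕ, ‖s‖ • r i = -(‖r i‖ • s) := by
      intro i
      have hi := h i
      rw [ht i, hτ] at hi
      have hnorm : ‖r i - s‖ = ‖r i‖ + ‖s‖ := by linarith
      have hsq : ‖r i - s‖ ^ 2 = (‖r i‖ + ‖s‖) ^ 2 := by rw [hnorm]
      rw [norm_sub_sq_real] at hsq
      have hinner : ⟪r i, -s⟫ = ‖r i‖ * ‖-s‖ := by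
        rw [inner_neg_right, norm_neg]
        nlinarith [hsq]
      have := (inner_eq_norm_mul_iff_real (x := r i) (y := -s)).mp hinner
      rw [norm_neg, smul_neg] at this
      exact this
    have h1 := key 1
    have h2 := key 2
    have hr1 : r 1 ≠ 0 := by
      have := hli.ne_zero 0
      simpa using this
    have hr1n : ‖r 1‖ ≠ 0 := norm_ne_zero_iff.mpr hr1
    -- ‖r 2‖ • r 1 = ‖r 1‖ • r 2
    have heq : ‖r 2‖ • r 1 = ‖r 1‖ • r 2 := by
      have hc : ‖s‖ • (‖r 2‖ • r 1) = ‖s‖ • (‖r 1‖ • r 2) := by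
        rw [smul_comm (‖s‖) (‖r 2‖), smul_comm (‖s‖) (‖r 1‖), h1, h2,
          smul_neg, smul_neg, smul_smul, smul_smul, mul_comm]
      exact smul_right_injective H hsn hc
    -- contradiction with linear independence
    have := linearIndependent_iff'.mp hli {0, 1}
      (fun j => if j = 0 then ‖r 2‖ else -‖r 1‖) ?_ 1 (by simp)
    · simp at this
      exact hr1 (by simpa using this)
    · simp only [Finset.sum_insert (by simp : (0 : ℕ) ∉ ({1} : Finset ℕ)),
        Finset.sum_singleton]
      simp only [if_pos rfl, if_neg (one_ne_zero)]
      rw [neg_smul]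
      show ‖r 2‖ • r 1 + -(‖r 1‖ • r 2) = 0
      rw [heq, add_neg_cancel]
  exact ⟨hs0, by rw [hτ, hs0, norm_zero, neg_zero]⟩
end

section
/- Suppose there exist real constants 0 < λ ≤ μ and a strictly increasing sequence (n k)_{k ∈ ℕ} of indices with n k ≥ 1 such that for every k: ⟨r (n k), r i⟩ = 0 for all 1 ≤ i < n k, and λ ≤ ‖r (n k)‖ ≤ μ. Then the sound ranging problem has at most one solution: if (s', t') and (s'', t'') both satisfy t i = τ + ‖r i − s‖ for all i ∈ ℕ, then s' = s'' and t' = t''. -/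
open RealInnerProductSpace

/-- If a subsequence of the sensors is orthogonal to all preceding sensors and has
norms bounded between `0 < λ ≤ μ`, then the sound ranging problem has at most one
solution. -/
theorem srp_unique_of_orthogonal_subsequence
    {H : Type*} [NormedAddCommGroup H] [InnerProductSpace ℝ H] [CompleteSpace H]
    (r : ℕ → H) (t : ℕ → ℝ)
    (hr0 : r 0 = 0) (ht0 : t 0 = 0)
    (hli : LinearIndependent ℝ (fun i : ℕ => r (i + 1)))
    (hdense : Dense (Submodule.span ℝ (Set.range fun i : ℕ => r (i + 1)) : Set H))
    (lam mu : ℝ) (hlam : 0 < lam) (hlammu : lam ≤ mu)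
    (n : ℕ → ℕ) (hmono : StrictMono n) (hn1 : ∀ k : ℕ, 1 ≤ n k)
    (horth : ∀ k : ℕ, ∀ i : ℕ, 1 ≤ i → i < n k → ⟪r (n k), r i⟫ = 0)
    (hnorm : ∀ k : ℕ, lam ≤ ‖r (n k)‖ ∧ ‖r (n k)‖ ≤ mu)
    (s' : H) (t' : ℝ) (hsol' : ∀ i : ℕ, t i = t' + ‖r i - s'‖)
    (s'' : H) (t'' : ℝ) (hsol'' : ∀ i : ℕ, t i = t'' + ‖r i - s''‖) :
    s' = s'' ∧ t' = t'' := by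
  set a : ℝ := ‖s'‖ with ha
  set b : ℝ := ‖s''‖ with hb
  -- t' = -a, t'' = -b
  have ht' : t' = -a := by
    have := hsol' 0
    rw [hr0, ht0, zero_sub, norm_neg] at this
    linarith
  have ht'' : t'' = -b := by
    have := hsol'' 0
    rw [hr0, ht0, zero_sub, norm_neg] at this
    linarith
  -- key identities
  have key' : ∀ i : ℕ, (t i + a) ^ 2 = ‖r i‖ ^ 2 - 2 * ⟪r i, s'⟫ + a ^ 2 := by
    intro i
    have h1 : t i + a = ‖r i - s'‖ := by rw [hsol' i, ht']; ring
    rw [h1, @norm_sub_sq_real]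
  have key'' : ∀ i : ℕ, (t i + b) ^ 2 = ‖r i‖ ^ 2 - 2 * ⟪r i, s''⟫ + b ^ 2 := by
    intro i
    have h1 : t i + b = ‖r i - s''‖ := by rw [hsol'' i, ht'']; ring
    rw [h1, @norm_sub_sq_real]
  have hinner : ∀ i : ℕ, ⟪r i, s'' - s'⟫ = t i * (a - b) := by
    intro i
    rw [inner_sub_right]
    nlinarith [key' i, key'' i]
  -- nonnegativity of t i + a
  have htpos : ∀ i : ℕ, 0 ≤ t i + a := by
    intro i
    have h1 : t i + a = ‖r i - s'‖ := by rw [hsol' i, ht']; ring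
    rw [h1]; exact norm_nonneg _
  -- orthonormal family
  have hne : ∀ k : ℕ, ‖r (n k)‖ ≠ 0 := fun k =>
    ne_of_gt (lt_of_lt_of_le hlam (hnorm k).1)
  have hon : Orthonormal ℝ (fun k : ℕ => (‖r (n k)‖)⁻¹ • r (n k)) := by
    constructor
    · intro k
      rw [norm_smul, norm_inv, norm_norm, inv_mul_cancel₀ (hne k)]
    · intro j k hjk
      have horth' : ∀ j k : ℕ, j < k → ⟪r (n j), r (n k)⟫ = 0 := by
        intro j k hlt
        rw [real_inner_comm]
        exact horth k (n j) (hn1 j) (hmono hlt)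
      rcases hjk.lt_or_gt with h | h
      · simp only [real_inner_smul_left, real_inner_smul_right, horth' j k h, mul_zero]
      · simp only [real_inner_smul_left, real_inner_smul_right]
        have h0 := horth' k j h
        rw [real_inner_comm] at h0
        rw [h0, mul_zero, mul_zero]
  -- Bessel ⇒ inner products tend to zero
  have bessel : ∀ x : H, Filter.Tendsto (fun k => ⟪r (n k), x⟫) Filter.atTop (nhds 0) := by
    intro x
    have hsum := hon.inner_products_summable (x := x)
    have h2 : Filter.Tendsto (fun k => ‖⟪(‖r (n k)‖)⁻¹ • r (n k), x⟫‖ ^ 2)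
        Filter.atTop (nhds 0) := hsum.tendsto_atTop_zero
    have h3 : Filter.Tendsto (fun k => ‖⟪(‖r (n k)‖)⁻¹ • r (n k), x⟫‖)
        Filter.atTop (nhds 0) := by
      have := h2.sqrt
      simpa [Real.sqrt_sq_eq_abs, abs_of_nonneg (norm_nonneg _)] using this
    rw [tendsto_zero_iff_norm_tendsto_zero]
    apply squeeze_zero (fun k => norm_nonneg _) _ (by simpa using h3.const_mul mu)
    intro k
    have h4 : ⟪r (n k), x⟫ = ‖r (n k)‖ * ⟪(‖r (n k)‖)⁻¹ • r (n k), x⟫ := by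
      rw [real_inner_smul_left, ← mul_assoc, mul_inv_cancel₀ (hne k), one_mul]
    rw [h4, norm_mul, norm_norm]
    exact mul_le_mul_of_nonneg_right (hnorm k).2 (norm_nonneg _)
  -- a = b
  have hab : a = b := by
    by_contra hab
    have hd : Filter.Tendsto (fun k => t (n k)) Filter.atTop (nhds 0) := by
      have h1 := (bessel (s'' - s')).div_const (a - b)
      have hne' : a - b ≠ 0 := sub_ne_zero.2 hab
      simp only [hinner, zero_div, mul_div_cancel_right₀ _ hne'] at h1
      exact h1
    have h2 : Filter.Tendsto (fun k => ‖r (n k)‖ ^ 2) Filter.atTop (nhds 0) := by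
      have h3 : (fun k => ‖r (n k)‖ ^ 2)
          = fun k => (t (n k) + a) ^ 2 + 2 * ⟪r (n k), s'⟫ - a ^ 2 := by
        funext k
        have := key' (n k)
        linarith
      rw [h3]
      have h4 : Filter.Tendsto (fun k => (t (n k) + a) ^ 2) Filter.atTop (nhds (a ^ 2)) := by
        have : Filter.Tendsto (fun k => t (n k) + a) Filter.atTop (nhds (0 + a)) :=
          hd.add tendsto_const_nhds
        simpa using this.pow 2
      have h5 := (h4.add ((bessel s').const_mul 2)).sub
        (tendsto_const_nhds (x := a ^ 2) (f := Filter.atTop (α := ℕ)))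
      simpa using h5
    have h6 := h2.eventually_lt_const (show (0:ℝ) < lam ^ 2 by positivity)
    rcases h6.exists with ⟨k, hk⟩
    have : lam ^ 2 ≤ ‖r (n k)‖ ^ 2 := by
      have := (hnorm k).1
      nlinarith
    linarith
  -- conclude
  have hzero : ∀ i : ℕ, ⟪r i, s'' - s'⟫ = 0 := by
    intro i
    rw [hinner i, hab, sub_self, mul_zero]
  have hsub : s'' - s' = 0 := by
    apply Dense.eq_zero_of_inner_left ℝ hdense
    intro v hv
    simp only [SetLike.mem_coe] at hv
    rw [real_inner_comm]
    induction hv using Submodule.span_induction with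
    | mem x hx =>
      rcases hx with ⟨i, rfl⟩
      exact hzero (i + 1)
    | zero => simp
    | add x y hx hy ihx ihy => rw [inner_add_left, ihx, ihy, add_zero]
    | smul c x hx ihx => rw [inner_smul_left, ihx, mul_zero]
  constructor
  · have : s'' = s' := by rwa [sub_eq_zero] at hsub
    exact this.symm
  · rw [ht', ht'', hab]
end

section
/- Extend the sensor set by the additional sensor −r 1 with arrival time t_ω ∈ ℝ. Then the extended sound ranging problem has at most one solution: if (s', t') and (s'', t'') both satisfy t i = τ + ‖r i − s‖ for all i ∈ ℕ together with t_ω = τ + ‖(−r 1) − s‖, then s' = s'' and t' = t''. -/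
open RealInnerProductSpace

private theorem srp_aux_collinear {H : Type*} [NormedAddCommGroup H] [InnerProductSpace ℝ H]
    (u s : H) (hu : u ≠ 0) (h : SameRay ℝ (s - u) (s + u)) : ∃ α : ℝ, s = α • u := by
  rcases h with h0 | h0 | ⟨a, b, ha, hb, hab⟩
  · exact ⟨1, by rw [one_smul, ← sub_eq_zero]; exact h0⟩
  · refine ⟨-1, ?_⟩
    have : s = -u := by rw [← sub_eq_zero, sub_neg_eq_add]; exact h0
    rw [this, neg_smul, one_smul]
  · have key : (a - b) • s = (a + b) • u := by
      linear_combination (norm := module) hab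
    by_cases hab' : a - b = 0
    · exfalso
      rw [hab', zero_smul] at key
      have : a + b ≠ 0 := by positivity
      exact hu (by simpa [smul_eq_zero, this] using key.symm)
    · have := congrArg (fun x => (a - b)⁻¹ • x) key
      simp only [smul_smul, inv_mul_cancel₀ hab', one_smul] at this
      exact ⟨_, this⟩

private theorem srp_aux_dep {H : Type*} [NormedAddCommGroup H] [InnerProductSpace ℝ H]
    (r : ℕ → H) (hli : LinearIndependent ℝ (fun i : ℕ => r (i + 1)))
    (hr1 : r 1 ≠ 0)
    (hkey : ‖r 2‖ ^ 2 * ‖r 1‖ ^ 2 = ⟪r 2, r 1⟫ ^ 2) : False := by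
  set ρ := ‖r 1‖ with hρdef
  set P := ⟪r 2, r 1⟫ with hPdef
  have hρ : (0:ℝ) < ρ := norm_pos_iff.mpr hr1
  have hw : ‖(ρ ^ 2) • r 2 - P • r 1‖ ^ 2 = 0 := by
    rw [norm_sub_sq_real, real_inner_smul_left, real_inner_smul_right, norm_smul, norm_smul,
      Real.norm_eq_abs, Real.norm_eq_abs, mul_pow, mul_pow, sq_abs, sq_abs]
    rw [← hPdef, ← hρdef]
    linear_combination (ρ ^ 2) * hkey
  have hz : (ρ ^ 2) • r 2 - P • r 1 = 0 := by
    have := (pow_eq_zero_iff (n := 2) (by norm_num)).mp hw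
    exact norm_eq_zero.mp this
  have hinj : Function.Injective ![(0 : ℕ), 1] := by decide
  have h2li := hli.comp ![0, 1] hinj
  rw [Fintype.linearIndependent_iff] at h2li
  have h0 : ∑ i : Fin 2, (![(-P), ρ ^ 2] i) • (fun j : Fin 2 => r (![0, 1] j + 1)) i = 0 := by
    simp only [Fin.sum_univ_two, Matrix.cons_val_zero, Matrix.cons_val_one, Matrix.head_cons]
    linear_combination (norm := module) hz
  have := h2li ![(-P), ρ ^ 2] h0 1
  simp only [Matrix.cons_val_one, Matrix.head_cons] at this
  exact (pow_ne_zero 2 hρ.ne') this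

/-- Extending the sensor set by the additional sensor `-(r 1)`, the extended sound
ranging problem has at most one solution. -/
theorem srp_unique_of_extension
    {H : Type*} [NormedAddCommGroup H] [InnerProductSpace ℝ H] [CompleteSpace H]
    (r : ℕ → H) (t : ℕ → ℝ) (tω : ℝ)
    (hr0 : r 0 = 0) (ht0 : t 0 = 0)
    (hli : LinearIndependent ℝ (fun i : ℕ => r (i + 1)))
    (hdense : Dense (Submodule.span ℝ (Set.range fun i : ℕ => r (i + 1)) : Set H))
    (s' : H) (t' : ℝ)
    (hsol' : ∀ i : ℕ, t i = t' + ‖r i - s'‖)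
    (hsol'ω : tω = t' + ‖(-(r 1)) - s'‖)
    (s'' : H) (t'' : ℝ)
    (hsol'' : ∀ i : ℕ, t i = t'' + ‖r i - s''‖)
    (hsol''ω : tω = t'' + ‖(-(r 1)) - s''‖) :
    s' = s'' ∧ t' = t'' := by
  have hr1 : r 1 ≠ 0 := by simpa using hli.ne_zero 0
  set ρ := ‖r 1‖ with hρdef
  have hρ : (0:ℝ) < ρ := norm_pos_iff.mpr hr1
  -- time offsets
  have ht' : t' = -‖s'‖ := by
    have h := hsol' 0
    rw [hr0, ht0] at h
    simp only [zero_sub, norm_neg] at h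
    linarith
  have ht'' : t'' = -‖s''‖ := by
    have h := hsol'' 0
    rw [hr0, ht0] at h
    simp only [zero_sub, norm_neg] at h
    linarith
  -- squared equations
  have E' : ∀ i, ‖r i‖ ^ 2 - 2 * ⟪r i, s'⟫ = (t i) ^ 2 + 2 * (t i) * ‖s'‖ := by
    intro i
    have hd : ‖r i - s'‖ = t i + ‖s'‖ := by rw [hsol' i, ht']; ring
    have h1 := norm_sub_sq_real (r i) s'
    rw [hd] at h1
    nlinarith [h1]
  have E'' : ∀ i, ‖r i‖ ^ 2 - 2 * ⟪r i, s''⟫ = (t i) ^ 2 + 2 * (t i) * ‖s''‖ := by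
    intro i
    have hd : ‖r i - s''‖ = t i + ‖s''‖ := by rw [hsol'' i, ht'']; ring
    have h1 := norm_sub_sq_real (r i) s''
    rw [hd] at h1
    nlinarith [h1]
  have Eω' : ρ ^ 2 + 2 * ⟪r 1, s'⟫ = tω ^ 2 + 2 * tω * ‖s'‖ := by
    have hd : ‖(-(r 1)) - s'‖ = tω + ‖s'‖ := by rw [hsol'ω, ht']; ring
    have h1 := norm_sub_sq_real (-(r 1)) s'
    rw [hd, norm_neg, inner_neg_left] at h1
    nlinarith [h1]
  have Eω'' : ρ ^ 2 + 2 * ⟪r 1, s''⟫ = tω ^ 2 + 2 * tω * ‖s''‖ := by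
    have hd : ‖(-(r 1)) - s''‖ = tω + ‖s''‖ := by rw [hsol''ω, ht'']; ring
    have h1 := norm_sub_sq_real (-(r 1)) s''
    rw [hd, norm_neg, inner_neg_left] at h1
    nlinarith [h1]
  by_cases hns : ‖s'‖ = ‖s''‖
  · -- equal radii: solutions coincide by density
    have hin : ∀ i, ⟪r i, s'⟫ = ⟪r i, s''⟫ := by
      intro i
      have h1 := E' i
      have h2 := E'' i
      rw [hns] at h1
      linarith
    have hs : s' = s'' := by
      apply hdense.eq_of_inner_right ℝ
      intro v hv
      simp only [SetLike.mem_coe] at hv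
      induction hv using Submodule.span_induction with
      | mem x hx =>
        obtain ⟨i, rfl⟩ := hx
        exact hin (i + 1)
      | zero => simp
      | add x y hx hy ihx ihy => simp [inner_add_left, ihx, ihy]
      | smul a x hx ihx => simp [real_inner_smul_left, ihx]
    refine ⟨hs, ?_⟩
    rw [ht', ht'', hns]
  · -- different radii: contradiction
    exfalso
    have hδ : ‖s'‖ - ‖s''‖ ≠ 0 := sub_ne_zero.mpr hns
    have D : ∀ i, ⟪r i, s'⟫ - ⟪r i, s''⟫ = -(t i) * (‖s'‖ - ‖s''‖) := by
      intro i
      have h1 := E' i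
      have h2 := E'' i
      ring_nf
      ring_nf at h1 h2
      linarith
    have Dω : ⟪r 1, s'⟫ - ⟪r 1, s''⟫ = tω * (‖s'‖ - ‖s''‖) := by
      ring_nf
      ring_nf at Eω' Eω''
      linarith
    have htω : tω = -(t 1) := by
      have h1 := D 1
      have h2 := Dω
      have h3 : (t 1 + tω) * (‖s'‖ - ‖s''‖) = 0 := by ring_nf; ring_nf at h1 h2; linarith
      rcases mul_eq_zero.mp h3 with h | h
      · linarith
      · exact absurd h hδ
    -- triangle-equality ⇒ collinearity
    have hray : ∀ s₀ : H, t 1 = -‖s₀‖ + ‖r 1 - s₀‖ → tω = -‖s₀‖ + ‖(-(r 1)) - s₀‖ →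
        ∃ α : ℝ, s₀ = α • r 1 := by
      intro s₀ h1 h2
      have hnorm : ‖(s₀ - r 1) + (s₀ + r 1)‖ = ‖s₀ - r 1‖ + ‖s₀ + r 1‖ := by
        have e1 : ‖r 1 - s₀‖ = ‖s₀ - r 1‖ := norm_sub_rev _ _
        have e2 : ‖(-(r 1)) - s₀‖ = ‖s₀ + r 1‖ := by
          rw [← norm_neg]; congr 1; abel
        have e3 : (s₀ - r 1) + (s₀ + r 1) = (2:ℝ) • s₀ := by
          rw [two_smul]; abel
        rw [e3, norm_smul]
        simp only [Real.norm_ofNat]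
        rw [e1] at h1
        rw [e2] at h2
        linarith [htω]
      exact srp_aux_collinear (r 1) s₀ hr1 (sameRay_iff_norm_add.mpr hnorm)
    obtain ⟨α, hα⟩ := hray s' (by rw [hsol' 1, ht']) (by rw [hsol'ω, ht'])
    obtain ⟨β, hβ⟩ := hray s'' (by rw [hsol'' 1, ht'']) (by rw [hsol''ω, ht''])
    have hnα : ‖s'‖ = |α| * ρ := by rw [hα, norm_smul, Real.norm_eq_abs]
    have hnβ : ‖s''‖ = |β| * ρ := by rw [hβ, norm_smul, Real.norm_eq_abs]
    have hiα : ∀ x, ⟪x, s'⟫ = α * ⟪x, r 1⟫ := fun x => by rw [hα, real_inner_smul_right]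
    have hiβ : ∀ x, ⟪x, s''⟫ = β * ⟪x, r 1⟫ := fun x => by rw [hβ, real_inner_smul_right]
    have hr11 : ⟪r 1, r 1⟫ = ρ ^ 2 := real_inner_self_eq_norm_sq (r 1)
    -- α ≠ 0 and β ≠ 0
    have hne0 : ∀ s₀ : H, s₀ = (0:ℝ) • r 1 → t 1 = -‖s₀‖ + ‖r 1 - s₀‖ →
        tω = -‖s₀‖ + ‖(-(r 1)) - s₀‖ → False := by
      intro s₀ h0 h1 h2
      rw [zero_smul] at h0
      subst h0
      simp only [norm_zero, neg_zero, zero_add, sub_zero, norm_neg] at h1 h2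
      rw [htω, h1] at h2
      rw [← hρdef] at h1 h2
      linarith
    have hα0 : α ≠ 0 := by
      intro h0
      exact hne0 s' (by rw [h0] at hα; exact hα) (by rw [hsol' 1, ht']) (by rw [hsol'ω, ht'])
    have hβ0 : β ≠ 0 := by
      intro h0
      exact hne0 s'' (by rw [h0] at hβ; exact hβ) (by rw [hsol'' 1, ht'']) (by rw [hsol''ω, ht''])
    -- scalar equations at sensor 1
    have A1 : ρ ^ 2 - 2 * (α * ρ ^ 2) = (t 1) ^ 2 + 2 * (t 1) * (|α| * ρ) := by
      have := E' 1; rw [hiα, hr11, hnα, ← hρdef] at this; exact this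
    have Aω1 : ρ ^ 2 + 2 * (α * ρ ^ 2) = tω ^ 2 + 2 * tω * (|α| * ρ) := by
      have := Eω'; rw [hiα, hr11, hnα] at this; exact this
    have B1 : ρ ^ 2 - 2 * (β * ρ ^ 2) = (t 1) ^ 2 + 2 * (t 1) * (|β| * ρ) := by
      have := E'' 1; rw [hiβ, hr11, hnβ, ← hρdef] at this; exact this
    have Bω1 : ρ ^ 2 + 2 * (β * ρ ^ 2) = tω ^ 2 + 2 * tω * (|β| * ρ) := by
      have := Eω''; rw [hiβ, hr11, hnβ] at this; exact this
    have hα1 : t 1 * |α| = -α * ρ := by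
      rw [htω] at Aω1
      have h : ρ * (t 1 * |α|) = ρ * (-α * ρ) := by
        ring_nf at A1 Aω1 ⊢
        linarith
      exact mul_left_cancel₀ hρ.ne' h
    have hβ1 : t 1 * |β| = -β * ρ := by
      rw [htω] at Bω1
      have h : ρ * (t 1 * |β|) = ρ * (-β * ρ) := by
        ring_nf at B1 Bω1 ⊢
        linarith
      exact mul_left_cancel₀ hρ.ne' h
    -- sign analysis
    have hsgn : (0 < α ∧ 0 < β ∧ t 1 = -ρ) ∨ (α < 0 ∧ β < 0 ∧ t 1 = ρ) := by
      rcases hα0.lt_or_gt with hA | hA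
      · rcases hβ0.lt_or_gt with hB | hB
        · refine Or.inr ⟨hA, hB, ?_⟩
          rw [abs_of_neg hA] at hα1
          have := mul_left_cancel₀ (a := -α) (by linarith) (by linarith [hα1] : -α * t 1 = -α * ρ)
          exact this
        · exfalso
          rw [abs_of_neg hA] at hα1
          rw [abs_of_pos hB] at hβ1
          have h1 : t 1 = ρ := mul_left_cancel₀ (a := -α) (by linarith)
            (by linarith [hα1] : -α * t 1 = -α * ρ)
          have h2 : t 1 = -ρ := mul_left_cancel₀ (a := β) (by linarith)
            (by linarith [hβ1] : β * t 1 = β * (-ρ))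
          linarith
      · rcases hβ0.lt_or_gt with hB | hB
        · exfalso
          rw [abs_of_pos hA] at hα1
          rw [abs_of_neg hB] at hβ1
          have h1 : t 1 = -ρ := mul_left_cancel₀ (a := α) (by linarith)
            (by linarith [hα1] : α * t 1 = α * (-ρ))
          have h2 : t 1 = ρ := mul_left_cancel₀ (a := -β) (by linarith)
            (by linarith [hβ1] : -β * t 1 = -β * ρ)
          linarith
        · refine Or.inl ⟨hA, hB, ?_⟩
          rw [abs_of_pos hA] at hα1
          exact mul_left_cancel₀ (a := α) (by linarith)
            (by linarith [hα1] : α * t 1 = α * (-ρ))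
    -- sensor 2
    set P := ⟪r 2, r 1⟫ with hPdef
    have D2 : (α - β) * P = -(t 2) * (|α| - |β|) * ρ := by
      have h := D 2
      rw [hiα, hiβ, hnα, hnβ, ← hPdef] at h
      ring_nf at h ⊢
      linarith
    have A2 : ‖r 2‖ ^ 2 - 2 * (α * P) = (t 2) ^ 2 + 2 * (t 2) * (|α| * ρ) := by
      have := E' 2; rw [hiα, hnα] at this; exact this
    have hαβ : α ≠ β := by
      intro h
      rw [h] at hnα
      exact hns (hnα.trans hnβ.symm)
    have hkey : ‖r 2‖ ^ 2 * ρ ^ 2 = P ^ 2 := by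
      rcases hsgn with ⟨hA, hB, _⟩ | ⟨hA, hB, _⟩
      · rw [abs_of_pos hA, abs_of_pos hB] at D2
        rw [abs_of_pos hA] at A2
        have hP : P = -(t 2) * ρ := by
          have h := D2
          have h2 : (α - β) * P = (α - β) * (-(t 2) * ρ) := by ring_nf; ring_nf at h; linarith
          exact mul_left_cancel₀ (sub_ne_zero.mpr hαβ) h2
        have h3 : ‖r 2‖ ^ 2 = (t 2) ^ 2 := by linear_combination A2 + 2 * α * hP
        rw [hP]
        linear_combination ρ ^ 2 * h3
      · rw [abs_of_neg hA, abs_of_neg hB] at D2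
        rw [abs_of_neg hA] at A2
        have hP : P = (t 2) * ρ := by
          have h := D2
          have h2 : (α - β) * P = (α - β) * ((t 2) * ρ) := by ring_nf; ring_nf at h; linarith
          exact mul_left_cancel₀ (sub_ne_zero.mpr hαβ) h2
        have h3 : ‖r 2‖ ^ 2 = (t 2) ^ 2 := by linear_combination A2 + 2 * α * hP
        rw [hP]
        linear_combination ρ ^ 2 * h3
    exact srp_aux_dep r hli hr1 hkey
end

section
/- Suppose (s', t') solves the sound ranging problem (t i = t' + ‖r i − s'‖ for all i ∈ ℕ), and (s'', t'') ≠ (s', t') is a pair satisfying the implied set of equations (t i − t'')² = ‖r i − s''‖² for all i ∈ ℕ. Then (s'', t'') is either a solution of the sound ranging problem (t i = t'' + ‖r i − s''‖ for all i ∈ ℕ) or a solution of the dual problem (t i = t'' − ‖r i − s''‖ for all i ∈ ℕ); no 'mixed' sign pattern is possible. -/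
open RealInnerProductSpace

/-- If the sound ranging problem has a solution, any other solution of the implied
set of equations is either a solution of the SRP or of the dual problem; no mixed
sign pattern is possible. -/
theorem srp_implied_solution_not_mixed
    {H : Type*} [NormedAddCommGroup H] [InnerProductSpace ℝ H] [CompleteSpace H]
    (r : ℕ → H) (t : ℕ → ℝ)
    (hr0 : r 0 = 0) (ht0 : t 0 = 0)
    (hli : LinearIndependent ℝ (fun i : ℕ => r (i + 1)))
    (hdense : Dense (Submodule.span ℝ (Set.range fun i : ℕ => r (i + 1)) : Set H))
    (s' : H) (t' : ℝ) (hsol : ∀ i : ℕ, t i = t' + ‖r i - s'‖)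
    (s'' : H) (t'' : ℝ) (hne : (s'', t'') ≠ (s', t'))
    (himp : ∀ i : ℕ, (t i - t'') ^ 2 = ‖r i - s''‖ ^ 2) :
    (∀ i : ℕ, t i = t'' + ‖r i - s''‖) ∨ (∀ i : ℕ, t i = t'' - ‖r i - s''‖) := by
  by_contra hcon
  push_neg at hcon
  obtain ⟨⟨a, ha⟩, ⟨b, hb⟩⟩ := hcon
  have habs : ∀ k, |t k - t''| = ‖r k - s''‖ := by
    intro k
    have h : Real.sqrt ((t k - t'') ^ 2) = Real.sqrt (‖r k - s''‖ ^ 2) := by rw [himp k]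
    rwa [Real.sqrt_sq_eq_abs, Real.sqrt_sq (norm_nonneg _)] at h
  -- a : strictly minus case
  have hta : t'' - t a = ‖r a - s''‖ := by
    rcases abs_cases (t a - t'') with ⟨h1, h2⟩ | ⟨h1, h2⟩
    · exact absurd (by linarith [habs a, (habs a).symm.trans h1] : t a = t'' + ‖r a - s''‖) ha
    · have := habs a; linarith
  have hta' : t a < t'' := by
    rcases lt_or_ge (t a) t'' with h | h
    · exact h
    · have : ‖r a - s''‖ = 0 := by have := habs a; rw [abs_of_nonneg (by linarith)] at this; linarith
      exact absurd (by linarith : t a = t'' + ‖r a - s''‖) ha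
  -- b : strictly plus case
  have htb : t b - t'' = ‖r b - s''‖ := by
    rcases abs_cases (t b - t'') with ⟨h1, h2⟩ | ⟨h1, h2⟩
    · have := habs b; linarith
    · exact absurd (by have := habs b; linarith : t b = t'' - ‖r b - s''‖) hb
  have htb' : t'' < t b := by
    rcases lt_or_ge t'' (t b) with h | h
    · exact h
    · have : ‖r b - s''‖ = 0 := by linarith [norm_nonneg (r b - s'')]
      exact absurd (by linarith : t b = t'' - ‖r b - s''‖) hb
  have has : r a ≠ s'' := by
    intro h
    rw [h, sub_self, norm_zero] at hta; linarith
  have hbs : r b ≠ s'' := by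
    intro h
    rw [h, sub_self, norm_zero] at htb; linarith
  -- plus case : same ray with a
  have plus : ∀ k, t'' ≤ t k → SameRay ℝ (r k - s'') (s'' - r a) := by
    intro k hk
    have h1 : t k - t'' = ‖r k - s''‖ := by
      have := habs k; rwa [abs_of_nonneg (by linarith)] at this
    have e1 : ‖r k - s'‖ - ‖r a - s'‖ ≤ ‖(r k - s') - (r a - s')‖ := norm_sub_norm_le _ _
    have e2 : ‖(r k - s'') + (s'' - r a)‖ ≤ ‖r k - s''‖ + ‖s'' - r a‖ := norm_add_le _ _
    have e3 : (r k - s') - (r a - s') = (r k - s'') + (s'' - r a) := by abel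
    rw [e3] at e1
    have hna : ‖s'' - r a‖ = ‖r a - s''‖ := norm_sub_rev _ _
    have hsk := hsol k
    have hsa := hsol a
    exact sameRay_iff_norm_add.mpr (le_antisymm e2 (by linarith))
  -- minus case : same ray with b
  have minus : ∀ k, t k ≤ t'' → SameRay ℝ (r b - s'') (s'' - r k) := by
    intro k hk
    have h1 : t'' - t k = ‖r k - s''‖ := by
      have := habs k; rwa [abs_of_nonpos (by linarith), neg_sub] at this
    have e1 : ‖r b - s'‖ - ‖r k - s'‖ ≤ ‖(r b - s') - (r k - s')‖ := norm_sub_norm_le _ _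
    have e2 : ‖(r b - s'') + (s'' - r k)‖ ≤ ‖r b - s''‖ + ‖s'' - r k‖ := norm_add_le _ _
    have e3 : (r b - s') - (r k - s') = (r b - s'') + (s'' - r k) := by abel
    rw [e3] at e1
    have hna : ‖s'' - r k‖ = ‖r k - s''‖ := norm_sub_rev _ _
    have hsk := hsol k
    have hsb := hsol b
    exact sameRay_iff_norm_add.mpr (le_antisymm e2 (by linarith))
  -- membership in the line through s'' with direction r b - s''
  have hminus_line : ∀ k, t k ≤ t'' → ∃ l : ℝ, r k = s'' + l • (r b - s'') := by
    intro k hk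
    obtain ⟨w, c, d, hc, hd, hcd, h1, h2⟩ := (minus k hk).exists_eq_smul
    have hc0 : c ≠ 0 := by
      rintro rfl
      rw [zero_smul, sub_eq_zero] at h1
      exact hbs h1
    refine ⟨-(d / c), ?_⟩
    have hw : c⁻¹ • (r b - s'') = w := by
      rw [h1, smul_smul, inv_mul_cancel₀ hc0, one_smul]
    have hrk : r k = s'' - d • w := by
      rw [← h2]; abel
    rw [hrk, ← hw, smul_smul, neg_smul, sub_eq_add_neg, div_eq_mul_inv, mul_comm]
  obtain ⟨la, hla⟩ := hminus_line a (le_of_lt hta')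
  have hla0 : la ≠ 0 := by
    rintro rfl
    rw [zero_smul, add_zero] at hla
    exact has hla
  have hline : ∀ k, ∃ l : ℝ, r k = s'' + l • (r b - s'') := by
    intro k
    rcases le_total (t k) t'' with hk | hk
    · exact hminus_line k hk
    · obtain ⟨w, c, d, hc, hd, hcd, h1, h2⟩ := (plus k hk).exists_eq_smul
      have hd0 : d ≠ 0 := by
        rintro rfl
        rw [zero_smul, sub_eq_zero] at h2
        exact has h2.symm
      have hsa : s'' - r a = (-la) • (r b - s'') := by rw [hla]; module
      have hw : w = (-la / d) • (r b - s'') := by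
        have : d • w = (-la) • (r b - s'') := h2 ▸ hsa
        calc w = d⁻¹ • (d • w) := by rw [smul_smul, inv_mul_cancel₀ hd0, one_smul]
        _ = (-la / d) • (r b - s'') := by rw [this, smul_smul, div_eq_mul_inv, mul_comm]
      refine ⟨c * (-la / d), ?_⟩
      have : r k = s'' + c • w := by rw [← h1]; abel
      rw [this, hw, smul_smul]
  obtain ⟨l1, e1⟩ := hline 1
  obtain ⟨l2, e2⟩ := hline 2
  obtain ⟨l3, e3⟩ := hline 3
  have hinj := hli.injective
  have h12 : l1 ≠ l2 := by
    intro h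
    rw [h] at e1
    have : (fun i : ℕ => r (i + 1)) 0 = (fun i : ℕ => r (i + 1)) 1 := by
      simpa using e1.trans e2.symm
    exact Nat.zero_ne_one (hinj this)
  have hcomb : (l2 - l3) • r 1 + (l3 - l1) • r 2 + (l1 - l2) • r 3 = 0 := by
    rw [e1, e2, e3]; module
  have hzero := linearIndependent_iff'.mp hli {0, 1, 2}
    (fun n => if n = 0 then l2 - l3 else if n = 1 then l3 - l1 else l1 - l2)
    (by
      rw [show ({0, 1, 2} : Finset ℕ) = insert 0 (insert 1 {2}) from rfl,
        Finset.sum_insert (by decide), Finset.sum_insert (by decide), Finset.sum_singleton]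
      norm_num
      linear_combination (norm := module) hcomb) 2 (by decide)
  simp at hzero
  exact h12 (by linarith)
end

section
/- If the sound ranging problem in H has a solution (some (s, τ) with t i = τ + ‖r i − s‖ for all i ∈ ℕ), then for every n ≥ 1 the downdimensioned problem SRP_n has a solution: there exist sₙ in the linear span of {r 1, …, r n} and τₙ ∈ ℝ such that t i = τₙ + ‖r i − sₙ‖ for all 0 ≤ i ≤ n. -/
open RealInnerProductSpace

set_option maxHeartbeats 1000000 in
/-- If the sound ranging problem in `H` has a solution, then for every `n ≥ 1` the
downdimensioned problem `SRP_n` has a solution. -/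
theorem srp_downdimensioned_has_solution
    {H : Type*} [NormedAddCommGroup H] [InnerProductSpace ℝ H] [CompleteSpace H]
    (r : ℕ → H) (t : ℕ → ℝ)
    (hr0 : r 0 = 0) (ht0 : t 0 = 0)
    (hli : LinearIndependent ℝ (fun i : ℕ => r (i + 1)))
    (hdense : Dense (Submodule.span ℝ (Set.range fun i : ℕ => r (i + 1)) : Set H))
    (hsol : ∃ (s : H) (τ : ℝ), ∀ i : ℕ, t i = τ + ‖r i - s‖) :
    ∀ n : ℕ, 1 ≤ n → ∃ (sn : H) (τn : ℝ),
      sn ∈ Submodule.span ℝ (r '' Set.Icc 1 n) ∧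
      ∀ i : ℕ, i ≤ n → t i = τn + ‖r i - sn‖ := by
  obtain ⟨s, τ, hs⟩ := hsol
  intro n hn
  set V : Submodule ℝ H := Submodule.span ℝ (r '' Set.Icc 1 n) with hV
  set u : Fin n → H := fun j => r ((j : ℕ) + 1) with hu
  have hrange : r '' Set.Icc 1 n = Set.range u := by
    ext x
    constructor
    · rintro ⟨i, ⟨h1, h2⟩, rfl⟩
      refine ⟨⟨i - 1, by omega⟩, ?_⟩
      simp only [hu]
      congr 1
      omega
    · rintro ⟨j, rfl⟩
      exact ⟨(j : ℕ) + 1, ⟨by omega, by omega⟩, rfl⟩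
  have hVu : V = Submodule.span ℝ (Set.range u) := by rw [hV, hrange]
  have huli : LinearIndependent ℝ u :=
    hli.comp (fun j : Fin n => (j : ℕ)) Fin.val_injective
  haveI : FiniteDimensional ℝ V := by
    rw [hVu]; exact FiniteDimensional.span_of_finite ℝ (Set.finite_range u)
  -- the linear map x ↦ (⟪u j, x⟫)
  set φ : V →ₗ[ℝ] (Fin n → ℝ) :=
    LinearMap.pi (fun j => ((innerSL ℝ (u j)).toLinearMap).comp V.subtype) with hφ
  have hφapp : ∀ (x : V) (j : Fin n), φ x j = ⟪u j, (x : H)⟫ := fun x j => rfl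
  have hφinj : Function.Injective φ := by
    rw [← LinearMap.ker_eq_bot, LinearMap.ker_eq_bot']
    intro x hx
    have hx' : ∀ j, ⟪u j, (x : H)⟫ = 0 := by
      intro j
      have := congrFun hx j
      simpa [hφapp] using this
    have hmem : (x : H) ∈ Submodule.span ℝ (Set.range u) := by
      rw [← hVu]; exact x.2
    have horth : ∀ y ∈ Submodule.span ℝ (Set.range u), ⟪y, (x : H)⟫ = 0 := by
      intro y hy
      induction hy using Submodule.span_induction with
      | mem y hy => obtain ⟨j, rfl⟩ := hy; exact hx' j
      | zero => simp
      | add a b _ _ ha hb => rw [inner_add_left, ha, hb]; ring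
      | smul c a _ ha => rw [real_inner_smul_left, ha]; ring
    have : ⟪(x : H), (x : H)⟫ = 0 := horth _ hmem
    have : (x : H) = 0 := by rwa [inner_self_eq_zero] at this
    exact Subtype.ext this
  have hrank : Module.finrank ℝ V = Module.finrank ℝ (Fin n → ℝ) := by
    rw [hVu, finrank_span_eq_card huli, Module.finrank_fin_fun, Fintype.card_fin]
  have hφsurj : Function.Surjective φ :=
    (LinearMap.injective_iff_surjective_of_finrank_eq_finrank hrank).mp hφinj
  obtain ⟨x₀v, hx₀v⟩ := hφsurj (fun j => (‖u j‖ ^ 2 - t ((j : ℕ) + 1) ^ 2) / 2)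
  obtain ⟨wv, hwv⟩ := hφsurj (fun j => t ((j : ℕ) + 1))
  set x₀ : H := (x₀v : H) with hx₀
  set w : H := (wv : H) with hw
  -- key inner-product identities, indexed by i ∈ [1, n]
  have hkey : ∀ i : ℕ, 1 ≤ i → i ≤ n →
      ⟪r i, x₀⟫ = (‖r i‖ ^ 2 - t i ^ 2) / 2 ∧ ⟪r i, w⟫ = t i := by
    intro i h1 h2
    have hlt : i - 1 < n := by omega
    have hji : ((⟨i - 1, hlt⟩ : Fin n) : ℕ) + 1 = i := by
      simp only []; omega
    have hj : u ⟨i - 1, hlt⟩ = r i := by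
      simp only [hu]; rw [hji]
    constructor
    · have h3 := congrFun hx₀v ⟨i - 1, hlt⟩
      rw [hφapp] at h3
      rw [← hx₀, hj, hji] at h3
      exact h3
    · have h3 := congrFun hwv ⟨i - 1, hlt⟩
      rw [hφapp] at h3
      rw [← hw, hj, hji] at h3
      exact h3
  -- facts about τ and s
  have hτs : τ = -‖s‖ := by
    have := hs 0
    rw [ht0, hr0, zero_sub, norm_neg] at this
    linarith
  have hinner_s : ∀ i : ℕ, ⟪r i, s⟫ = (‖r i‖ ^ 2 - t i ^ 2) / 2 + t i * τ := by
    intro i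
    have h1 : t i - τ = ‖r i - s‖ := by have := hs i; linarith
    have h2 : (t i - τ) ^ 2 = ‖r i‖ ^ 2 - 2 * ⟪r i, s⟫ + ‖s‖ ^ 2 := by
      rw [h1, norm_sub_sq_real]
    have h3 : ‖s‖ ^ 2 = τ ^ 2 := by rw [hτs]; ring
    nlinarith [h2, h3]
  have hτle : ∀ i : ℕ, τ ≤ t i := by
    intro i; have := hs i; have := norm_nonneg (r i - s); linarith
  -- T = min of arrival times
  have hne : (Finset.Icc 0 n).Nonempty := ⟨0, by simp⟩
  set T : ℝ := (Finset.Icc 0 n).inf' hne t with hT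
  have hτT : τ ≤ T := Finset.le_inf' hne t (fun i _ => hτle i)
  have hT0 : T ≤ 0 := by
    have h := Finset.inf'_le t (Finset.mem_Icc.mpr ⟨Nat.zero_le 0, Nat.zero_le n⟩)
    rw [ht0] at h
    exact h
  have hTi : ∀ i : ℕ, i ≤ n → T ≤ t i := by
    intro i hi
    exact Finset.inf'_le t (Finset.mem_Icc.mpr ⟨Nat.zero_le i, hi⟩)
  -- the quadratic
  set g : ℝ → ℝ := fun c => ‖x₀ + c • w‖ ^ 2 - c ^ 2 with hg
  have hgc : Continuous g := by
    apply Continuous.sub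
    · exact ((continuous_const.add (continuous_id.smul continuous_const)).norm).pow 2
    · exact continuous_pow 2
  have hxin : ∀ (c : ℝ) (i : ℕ), 1 ≤ i → i ≤ n →
      ⟪r i, x₀ + c • w⟫ = (‖r i‖ ^ 2 - t i ^ 2) / 2 + t i * c := by
    intro c i h1 h2
    rw [inner_add_right, real_inner_smul_right, (hkey i h1 h2).1, (hkey i h1 h2).2]
    ring
  -- g τ ≤ 0
  have hgτ : g τ ≤ 0 := by
    set p : H := x₀ + τ • w with hp
    have horthgen : ∀ j : Fin n, ⟪u j, p - s⟫ = 0 := by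
      intro j
      rw [inner_sub_right]
      have h1 : (1 : ℕ) ≤ (j : ℕ) + 1 := by omega
      have h2 : (j : ℕ) + 1 ≤ n := by omega
      have := hxin τ ((j : ℕ) + 1) h1 h2
      have h4 := hinner_s ((j : ℕ) + 1)
      have hju : r ((j : ℕ) + 1) = u j := rfl
      rw [hju] at this h4
      rw [this, h4]; ring
    have horth : ∀ y ∈ Submodule.span ℝ (Set.range u), ⟪y, p - s⟫ = 0 := by
      intro y hy
      induction hy using Submodule.span_induction with
      | mem y hy => obtain ⟨j, rfl⟩ := hy; exact horthgen j
      | zero => simp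
      | add a b _ _ ha hb => rw [inner_add_left, ha, hb]; ring
      | smul c a _ ha => rw [real_inner_smul_left, ha]; ring
    have hpV : p ∈ Submodule.span ℝ (Set.range u) := by
      rw [← hVu]
      exact V.add_mem x₀v.2 (V.smul_mem τ wv.2)
    have hpo : ⟪p, p - s⟫ = 0 := horth p hpV
    have hss : ‖s‖ ^ 2 = ‖p‖ ^ 2 - 2 * ⟪p, p - s⟫ + ‖p - s‖ ^ 2 := by
      have : s = p - (p - s) := by abel
      rw [this, norm_sub_sq_real]
      congr 2 <;> rw [← this]
    have h3 : ‖s‖ ^ 2 = τ ^ 2 := by rw [hτs]; ring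
    have := sq_nonneg ‖p - s‖
    simp only [hg]
    rw [← hp]
    nlinarith [hpo, hss, h3]
  -- g T ≥ 0
  have hgT : 0 ≤ g T := by
    obtain ⟨j, hjmem, hjeq⟩ := Finset.exists_mem_eq_inf' hne t
    have hjn : j ≤ n := by simpa using (Finset.mem_Icc.mp hjmem).2
    rcases Nat.eq_zero_or_pos j with hj0 | hjpos
    · have hTz : T = 0 := by rw [hT, hjeq, hj0, ht0]
      simp only [hg, hTz]
      have : ‖x₀ + (0 : ℝ) • w‖ ^ 2 - (0:ℝ) ^ 2 = ‖x₀‖ ^ 2 := by simp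
      rw [this]
      positivity
    · have hTj : T = t j := by rw [hT, hjeq]
      have hrj : r j ≠ 0 := by
        have := huli.ne_zero ⟨j - 1, by omega⟩
        simp only [hu] at this
        convert this using 2
        omega
      have hA : 0 < ‖r j‖ := norm_pos_iff.mpr hrj
      have hCS := real_inner_le_norm (r j) (x₀ + T • w)
      have hin := hxin T j hjpos hjn
      rw [hin] at hCS
      rw [hTj] at hCS ⊢
      simp only [hg]
      have hC : (0 : ℝ) ≤ ‖x₀ + t j • w‖ := norm_nonneg _
      have hL : (‖r j‖ ^ 2 + t j ^ 2) / 2 ≤ ‖r j‖ * ‖x₀ + t j • w‖ := by linarith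
      have hsq2 : ((‖r j‖ ^ 2 + t j ^ 2) / 2) ^ 2 ≤ (‖r j‖ * ‖x₀ + t j • w‖) ^ 2 := by
        have h0 : (0:ℝ) ≤ (‖r j‖ ^ 2 + t j ^ 2) / 2 := by positivity
        exact pow_le_pow_left₀ h0 hL 2
      nlinarith [hsq2, sq_nonneg (‖r j‖ ^ 2 - t j ^ 2), mul_pos hA hA]
  -- IVT
  obtain ⟨τn, hτnmem, hτn0⟩ :=
    intermediate_value_Icc hτT (hgc.continuousOn) ⟨hgτ, hgT⟩
  obtain ⟨hττn, hτnT⟩ := hτnmem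
  set sn : H := x₀ + τn • w with hsn
  have hsnV : sn ∈ V := V.add_mem x₀v.2 (V.smul_mem τn wv.2)
  have hτnle0 : τn ≤ 0 := le_trans hτnT hT0
  have hsnnorm : ‖sn‖ = -τn := by
    have h2 : ‖sn‖ ^ 2 = τn ^ 2 := by
      have : g τn = 0 := hτn0
      simp only [hg] at this
      rw [← hsn] at this
      linarith
    have : ‖sn‖ = |τn| := by
      rw [← Real.sqrt_sq_eq_abs, ← h2, Real.sqrt_sq (norm_nonneg _)]
    rw [this, abs_of_nonpos hτnle0]
  refine ⟨sn, τn, hsnV, ?_⟩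
  intro i hi
  rcases Nat.eq_zero_or_pos i with hi0 | hipos
  · rw [hi0, ht0, hr0, zero_sub, norm_neg, hsnnorm]; ring
  · have hsq : ‖r i - sn‖ ^ 2 = (t i - τn) ^ 2 := by
      rw [norm_sub_sq_real]
      have := hxin τn i hipos hi
      rw [← hsn] at this
      rw [this]
      have h2 : ‖sn‖ ^ 2 = τn ^ 2 := by
        rw [hsnnorm]; ring
      rw [h2]; ring
    have hnon : 0 ≤ t i - τn := by
      have := hTi i hi; linarith
    have : ‖r i - sn‖ = |t i - τn| := by
      rw [← Real.sqrt_sq_eq_abs, ← hsq, Real.sqrt_sq (norm_nonneg _)]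
    rw [this, abs_of_nonneg hnon]
    ring
end

section
/- Suppose the sound ranging problem has a unique solution (s^∞, t^∞) with s^∞ ≠ 0; suppose for each n ≥ 1 the downdimensioned problem SRP_n has a unique solution (s^n, t^n) with s^n ≠ 0; and suppose there exists c ∈ H such that ⟨r i, c⟩ = t i for all i ≥ 1 (equivalently, the coefficient series Σ c̃ⱼ² converges). Then t^n → t^∞ in ℝ and s^n → s^∞ in the norm of H as n → ∞. -/
open RealInnerProductSpace Filter

set_option maxHeartbeats 1000000

lemma aux_norm_eq_of_sq {H : Type*} [NormedAddCommGroup H]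
    (x : H) {a : ℝ} (ha : 0 ≤ a) (h : ‖x‖ ^ 2 = a ^ 2) : ‖x‖ = a := by
  have h1 : (‖x‖ - a) * (‖x‖ + a) = 0 := by nlinarith
  rcases mul_eq_zero.1 h1 with h2 | h2
  · linarith
  · have := norm_nonneg x; linarith

lemma aux_inner_of_dist {H : Type*} [NormedAddCommGroup H] [InnerProductSpace ℝ H]
    (x s : H) {ti σ : ℝ} (hσ : ‖s‖ = σ) (h : ‖x - s‖ = ti + σ) :
    ⟪x, s⟫ = (‖x‖ ^ 2 - ti ^ 2) / 2 - σ * ti := by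
  have h2 := norm_sub_sq_real x s
  rw [h, hσ] at h2
  have h3 : (ti + σ) ^ 2 = ti ^ 2 + 2 * ti * σ + σ ^ 2 := by ring
  linarith

lemma aux_proj_norm_le {H : Type*} [NormedAddCommGroup H] [InnerProductSpace ℝ H]
    [CompleteSpace H] (K : Submodule ℝ H) [Submodule.HasOrthogonalProjection K] (x : H) :
    ‖(Submodule.orthogonalProjection K x : H)‖ ≤ ‖x‖ := by
  calc ‖Submodule.orthogonalProjection K x‖ ≤ ‖Submodule.orthogonalProjection K‖ * ‖x‖ :=
        (Submodule.orthogonalProjection K).le_opNorm x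
    _ ≤ 1 * ‖x‖ := mul_le_mul_of_nonneg_right (Submodule.orthogonalProjection_norm_le _) (norm_nonneg x)
    _ = ‖x‖ := one_mul _

/-- Galerkin-type convergence: if the SRP has a unique solution `(sInfty, tInfty)` with
`sInfty ≠ 0`, each downdimensioned problem `SRP_n` has a unique solution
`(sN n, tN n)` with `sN n ≠ 0`, and the coefficient series converges (i.e. there
is `c ∈ H` with `⟪r i, c⟫ = t i` for all `i ≥ 1`), then `tN n → tInfty` and
`sN n → sInfty`. -/
theorem srp_downdimensioned_converges
    {H : Type*} [NormedAddCommGroup H] [InnerProductSpace ℝ H] [CompleteSpace H]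
    (r : ℕ → H) (t : ℕ → ℝ)
    (hr0 : r 0 = 0) (ht0 : t 0 = 0)
    (hli : LinearIndependent ℝ (fun i : ℕ => r (i + 1)))
    (hdense : Dense (Submodule.span ℝ (Set.range fun i : ℕ => r (i + 1)) : Set H))
    (sInfty : H) (tInfty : ℝ) (hsInfty : sInfty ≠ 0)
    (hsolInfty : ∀ i : ℕ, t i = tInfty + ‖r i - sInfty‖)
    (huniqInfty : ∀ (s : H) (τ : ℝ), (∀ i : ℕ, t i = τ + ‖r i - s‖) → s = sInfty ∧ τ = tInfty)
    (sN : ℕ → H) (tN : ℕ → ℝ)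
    (hsolN : ∀ n : ℕ, 1 ≤ n →
      sN n ∈ Submodule.span ℝ (r '' Set.Icc 1 n) ∧ sN n ≠ 0 ∧
      (∀ i : ℕ, i ≤ n → t i = tN n + ‖r i - sN n‖))
    (huniqN : ∀ n : ℕ, 1 ≤ n → ∀ (s : H) (τ : ℝ),
      s ∈ Submodule.span ℝ (r '' Set.Icc 1 n) →
      (∀ i : ℕ, i ≤ n → t i = τ + ‖r i - s‖) → s = sN n ∧ τ = tN n)
    (c : H) (hc : ∀ i : ℕ, 1 ≤ i → ⟪r i, c⟫ = t i) :
    Filter.Tendsto tN Filter.atTop (nhds tInfty) ∧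
      Filter.Tendsto sN Filter.atTop (nhds sInfty) := by
  classical
  -- projections onto the finite-dimensional spans
  haveI instG : ∀ n : ℕ, Submodule.HasOrthogonalProjection (Submodule.span ℝ (r '' Set.Icc 1 n)) := by
    intro n
    haveI : FiniteDimensional ℝ (Submodule.span ℝ (r '' Set.Icc 1 n)) :=
      FiniteDimensional.span_of_finite ℝ ((Set.finite_Icc 1 n).image r)
    infer_instance
  set P : ℕ → H → H := fun n x =>
    (Submodule.orthogonalProjection (Submodule.span ℝ (r '' Set.Icc 1 n)) x : H) with hP
  have hPle : ∀ (n : ℕ) (x : H), ‖P n x‖ ≤ ‖x‖ := fun n x => aux_proj_norm_le _ x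
  have hPlin : ∀ (n : ℕ) (a b : H) (k : ℝ), P n (a - k • b) = P n a - k • P n b := by
    intro n a b k
    simp only [hP, map_sub, map_smul, Submodule.coe_sub, Submodule.coe_smul]
  have hPchar : ∀ (n : ℕ) (x v : H), v ∈ Submodule.span ℝ (r '' Set.Icc 1 n) →
      (∀ i : ℕ, 1 ≤ i → i ≤ n → ⟪r i, x - v⟫ = 0) → P n x = v := by
    intro n x v hv hinner
    refine (Submodule.starProjection_apply _ x).symm.trans
      (Submodule.eq_starProjection_of_mem_of_inner_eq_zero hv ?_)
    intro w hw
    induction hw using Submodule.span_induction with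
    | mem w hw =>
        obtain ⟨i, hi, rfl⟩ := hw
        rw [real_inner_comm]
        exact hinner i hi.1 hi.2
    | zero => simp
    | add a b _ _ ha hb => rw [inner_add_right, ha, hb]; ring
    | smul k a _ ha => rw [real_inner_smul_right, ha]; ring
  have hPtend : ∀ x : H, Tendsto (fun n => P n x) atTop (nhds x) := by
    intro x
    have hmono : Monotone (fun n : ℕ => Submodule.span ℝ (r '' Set.Icc 1 n)) := by
      intro a b hab
      exact Submodule.span_mono (Set.image_mono (Set.Icc_subset_Icc_right hab))
    have htop : ⊤ ≤ (⨆ n : ℕ, Submodule.span ℝ (r '' Set.Icc 1 n)).topologicalClosure := by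
      have hd : (Submodule.span ℝ (Set.range fun i : ℕ => r (i + 1))).topologicalClosure = ⊤ :=
        Submodule.dense_iff_topologicalClosure_eq_top.mp hdense
      rw [← hd]
      apply Submodule.topologicalClosure_mono
      rw [Submodule.span_le]
      rintro _ ⟨i, rfl⟩
      apply Submodule.mem_iSup_of_mem (i + 1)
      exact Submodule.subset_span ⟨i + 1, ⟨Nat.le_add_left 1 i, le_refl _⟩, rfl⟩
    convert Submodule.starProjection_tendsto_self _ hmono x htop using 1
    funext n
    exact (Submodule.starProjection_apply _ _).symm
  -- basic quantities
  set σ : ℕ → ℝ := fun n => ‖sN n‖ with hσdef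
  have hσn : ∀ m, σ m = ‖sN m‖ := fun m => by rw [hσdef]
  have hσ0 : ∀ n, 0 ≤ σ n := fun n => norm_nonneg _
  have hσIpos : (0:ℝ) < ‖sInfty‖ := norm_pos_iff.mpr hsInfty
  have htI : tInfty = -‖sInfty‖ := by
    have h0 := hsolInfty 0
    rw [hr0, ht0] at h0
    simp only [zero_sub, norm_neg] at h0
    linarith
  set u : H := sInfty + ‖sInfty‖ • c with hudef
  have htN : ∀ n, 1 ≤ n → tN n = -σ n := by
    intro n hn
    have h0 := (hsolN n hn).2.2 0 (Nat.zero_le n)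
    rw [hr0, ht0] at h0
    simp only [zero_sub, norm_neg] at h0
    have := hσn n
    linarith
  have hdistI : ∀ i, ‖r i - sInfty‖ = t i + ‖sInfty‖ := by
    intro i; have := hsolInfty i; linarith
  have hdistN : ∀ n, 1 ≤ n → ∀ i, i ≤ n → ‖r i - sN n‖ = t i + σ n := by
    intro n hn i hin
    have h1 := (hsolN n hn).2.2 i hin
    have h2 := htN n hn
    linarith
  have hinnerI : ∀ i, 1 ≤ i →
      ⟪r i, sInfty⟫ = (‖r i‖ ^ 2 - t i ^ 2) / 2 - ‖sInfty‖ * t i :=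
    fun i _ => aux_inner_of_dist (r i) sInfty rfl (hdistI i)
  have hinnerU : ∀ i, 1 ≤ i → ⟪r i, u⟫ = (‖r i‖ ^ 2 - t i ^ 2) / 2 := by
    intro i hi
    rw [hudef, inner_add_right, real_inner_smul_right, hc i hi, hinnerI i hi]
    ring
  have hinnerN : ∀ n, 1 ≤ n → ∀ i, 1 ≤ i → i ≤ n →
      ⟪r i, sN n⟫ = (‖r i‖ ^ 2 - t i ^ 2) / 2 - σ n * t i :=
    fun n hn i _ hin => aux_inner_of_dist _ _ (hσn n).symm (hdistN n hn i hin)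
  -- the Galerkin representation of the solutions
  have hrep : ∀ n, 1 ≤ n → sN n = P n u - σ n • P n c := by
    intro n hn
    have h1 : P n (u - σ n • c) = sN n := by
      apply hPchar n _ _ (hsolN n hn).1
      intro i hi1 hin
      rw [inner_sub_right, inner_sub_right, real_inner_smul_right, hc i hi1,
        hinnerU i hi1, hinnerN n hn i hi1 hin]
      ring
    rw [← h1, hPlin]
  -- the quadratic equation satisfied by σ n
  have hEn : ∀ n, 1 ≤ n → σ n ^ 2 =
      ‖P n u‖ ^ 2 - 2 * σ n * ⟪P n u, P n c⟫ + σ n ^ 2 * ‖P n c‖ ^ 2 := by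
    intro n hn
    have h2 : σ n ^ 2 = ‖P n u - σ n • P n c‖ ^ 2 := by
      conv_lhs => rw [hσn n, hrep n hn]
    rw [norm_sub_sq_real, real_inner_smul_right, norm_smul, Real.norm_eq_abs,
      abs_of_nonneg (hσ0 n), mul_pow] at h2
    linear_combination h2
  -- from a nonnegative root of the limit quadratic with the sign conditions,
  -- uniqueness of the SRP solution pins down the value
  have hsolve : ∀ x : ℝ, 0 ≤ x → ‖u - x • c‖ ^ 2 = x ^ 2 →
      (∀ i, 1 ≤ i → 0 ≤ t i + x) → x = ‖sInfty‖ := by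
    intro x hx hx2 hsign
    have hnorm : ‖u - x • c‖ = x := aux_norm_eq_of_sq _ hx hx2
    have hsol : ∀ i, t i = -x + ‖r i - (u - x • c)‖ := by
      intro i
      rcases Nat.eq_zero_or_pos i with rfl | hi
      · rw [hr0, ht0, zero_sub, norm_neg, hnorm]; ring
      · have hsq : ‖r i - (u - x • c)‖ ^ 2 = (t i + x) ^ 2 := by
          rw [norm_sub_sq_real, inner_sub_right, real_inner_smul_right, hc i hi,
            hinnerU i hi, hx2]
          ring
        have := aux_norm_eq_of_sq (r i - (u - x • c)) (hsign i hi) hsq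
        linarith
    have h := (huniqInfty _ _ hsol).2
    linarith
  -- boundedness of σ
  have hbnd : ∃ M : ℝ, ∀ᶠ n in atTop, σ n ≤ M := by
    rcases lt_trichotomy ‖c‖ 1 with hK | hK | hK
    · refine ⟨‖u‖ / (1 - ‖c‖), eventually_atTop.2 ⟨1, fun n hn => ?_⟩⟩
      have h2 := norm_sub_le (P n u) (σ n • P n c)
      rw [norm_smul, Real.norm_eq_abs, abs_of_nonneg (hσ0 n)] at h2
      have h3 : σ n = ‖P n u - σ n • P n c‖ := by
        conv_lhs => rw [hσn n, hrep n hn]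
      have h4 := hPle n u
      have h5 := hPle n c
      have h6 : σ n * ‖P n c‖ ≤ σ n * ‖c‖ := mul_le_mul_of_nonneg_left h5 (hσ0 n)
      rw [le_div_iff₀ (by linarith)]
      linarith
    · -- ‖c‖ = 1
      have h0 : u - ‖sInfty‖ • c = sInfty := by rw [hudef]; exact add_sub_cancel_right _ _
      have huI : ‖u‖ ^ 2 = 2 * ⟪u, c⟫ * ‖sInfty‖ := by
        have h1 : ‖u - ‖sInfty‖ • c‖ ^ 2 = ‖sInfty‖ ^ 2 := by rw [h0]
        rw [norm_sub_sq_real, real_inner_smul_right, norm_smul, Real.norm_eq_abs,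
          abs_of_nonneg (norm_nonneg sInfty), hK, mul_pow] at h1
        linear_combination h1
      have hune : u ≠ 0 := by
        intro h0u
        have hcontr : ‖sInfty‖ + 1 = ‖sInfty‖ := by
          apply hsolve (‖sInfty‖ + 1) (by positivity)
          · rw [h0u, zero_sub, norm_neg, norm_smul, Real.norm_eq_abs,
              abs_of_nonneg (by positivity), hK, mul_one]
          · intro i hi
            have hd := hdistI i
            have := norm_nonneg (r i - sInfty)
            linarith
        linarith
      have hβ : 0 < ⟪u, c⟫ := by
        have h2 : 0 < ‖u‖ := norm_pos_iff.mpr hune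
        nlinarith [huI, mul_pos h2 h2, hσIpos]
      have hbtend : Tendsto (fun n => ⟪P n u, P n c⟫) atTop (nhds ⟪u, c⟫) :=
        (hPtend u).inner (hPtend c)
      have hev := hbtend.eventually (eventually_gt_nhds (show ⟪u, c⟫ / 2 < ⟪u, c⟫ by linarith))
      refine ⟨‖u‖ ^ 2 / (⟪u, c⟫ / 2), ?_⟩
      filter_upwards [hev, eventually_ge_atTop 1] with n hb hn
      have hE := hEn n hn
      have hq : ‖P n c‖ ≤ 1 := le_of_le_of_eq (hPle n c) hK
      have hPu := hPle n u
      have h5 : σ n ^ 2 * ‖P n c‖ ^ 2 ≤ σ n ^ 2 := by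
        have hq2 : ‖P n c‖ ^ 2 ≤ 1 := by nlinarith [norm_nonneg (P n c)]
        nlinarith [mul_le_mul_of_nonneg_left hq2 (sq_nonneg (σ n))]
      have h6 : 2 * σ n * ⟪P n u, P n c⟫ ≤ ‖u‖ ^ 2 := by
        nlinarith [norm_nonneg (P n u), mul_le_mul hPu hPu (norm_nonneg _) (norm_nonneg _)]
      rw [le_div_iff₀ (by linarith)]
      linarith [mul_le_mul_of_nonneg_left hb.le (hσ0 n), h6, sq_nonneg ‖u‖]
    · -- ‖c‖ > 1
      have hqt : Tendsto (fun n => ‖P n c‖) atTop (nhds ‖c‖) := (hPtend c).norm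
      have hev := hqt.eventually
        (eventually_gt_nhds (show (1 + ‖c‖) / 2 < ‖c‖ by linarith))
      have ha : 0 < ((1 + ‖c‖) / 2) ^ 2 - 1 := by nlinarith
      refine ⟨2 * ‖u‖ * ‖c‖ / (((1 + ‖c‖) / 2) ^ 2 - 1), ?_⟩
      filter_upwards [hev, eventually_ge_atTop 1] with n hq hn
      have hE := hEn n hn
      have hb : ⟪P n u, P n c⟫ ≤ ‖u‖ * ‖c‖ :=
        le_trans (real_inner_le_norm _ _)
          (mul_le_mul (hPle n u) (hPle n c) (norm_nonneg _) (norm_nonneg _))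
      have hq2 : ((1 + ‖c‖) / 2) ^ 2 ≤ ‖P n c‖ ^ 2 := by
        nlinarith [norm_nonneg (P n c), hq]
      rw [le_div_iff₀ ha]
      have key : σ n ^ 2 * (((1 + ‖c‖) / 2) ^ 2 - 1) ≤ 2 * σ n * (‖u‖ * ‖c‖) := by
        have k1 := mul_le_mul_of_nonneg_left hq2 (sq_nonneg (σ n))
        have k2 := mul_le_mul_of_nonneg_left hb (hσ0 n)
        have k3 := sq_nonneg ‖P n u‖
        linarith
      rcases eq_or_lt_of_le (hσ0 n) with hσe | hσp
      · rw [← hσe]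
        have h9 : (0:ℝ) ≤ 2 * ‖u‖ * ‖c‖ := by positivity
        linarith
      · nlinarith [key, hσp]
  -- any cluster point of σ must be ‖sInfty‖
  have hcluster : ∀ x : ℝ, MapClusterPt x atTop σ → x = ‖sInfty‖ := by
    intro x hx
    obtain ⟨ψ, hψmono, hψtend⟩ := TopologicalSpace.FirstCountableTopology.tendsto_subseq hx
    have hψtop : Tendsto ψ atTop atTop := hψmono.tendsto_atTop
    have hψge : ∀ k, k ≤ ψ k := fun k => hψmono.le_apply
    have hx0 : 0 ≤ x := ge_of_tendsto' hψtend fun k => hσ0 (ψ k)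
    apply hsolve x hx0
    · -- the limit equation
      have hPu : Tendsto (fun k => P (ψ k) u) atTop (nhds u) := (hPtend u).comp hψtop
      have hPc : Tendsto (fun k => P (ψ k) c) atTop (nhds c) := (hPtend c).comp hψtop
      have h1 : Tendsto (fun k => ‖P (ψ k) u - σ (ψ k) • P (ψ k) c‖ ^ 2 - σ (ψ k) ^ 2)
          atTop (nhds (‖u - x • c‖ ^ 2 - x ^ 2)) :=
        ((hPu.sub (hψtend.smul hPc)).norm.pow 2).sub (hψtend.pow 2)
      have h2 : (fun k => ‖P (ψ k) u - σ (ψ k) • P (ψ k) c‖ ^ 2 - σ (ψ k) ^ 2)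
          =ᶠ[atTop] fun _ => (0:ℝ) := by
        filter_upwards [eventually_ge_atTop 1] with k hk
        have hn : 1 ≤ ψ k := le_trans hk (hψge k)
        rw [← hrep (ψ k) hn, ← hσn (ψ k), sub_self]
      have h3 : ‖u - x • c‖ ^ 2 - x ^ 2 = 0 :=
        (tendsto_nhds_unique (Filter.Tendsto.congr' h2 h1) tendsto_const_nhds)
      linarith
    · -- sign conditions
      intro i hi
      have h4 : Tendsto (fun k => t i + σ (ψ k)) atTop (nhds (t i + x)) :=
        tendsto_const_nhds.add hψtend
      have h5 : ∀ᶠ k in atTop, 0 ≤ t i + σ (ψ k) := by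
        filter_upwards [eventually_ge_atTop i, eventually_ge_atTop 1] with k hk hk1
        have h6 := hdistN (ψ k) (le_trans hk1 (hψge k)) i (le_trans hk (hψge k))
        have := norm_nonneg (r i - sN (ψ k))
        linarith
      exact ge_of_tendsto h4 h5
  -- conclusion via limsup / liminf
  have hup : IsBoundedUnder (· ≤ ·) atTop σ := by
    obtain ⟨M, hM⟩ := hbnd
    exact ⟨M, eventually_map.2 hM⟩
  have hlo : IsBoundedUnder (· ≥ ·) atTop σ :=
    ⟨0, eventually_map.2 (Eventually.of_forall hσ0)⟩
  have hclsup : MapClusterPt (limsup σ atTop) atTop σ := by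
    rw [mapClusterPt_iff_frequently]
    intro s hs
    obtain ⟨ε, hε, hball⟩ := Metric.mem_nhds_iff.1 hs
    have h1 : ∃ᶠ n in atTop, limsup σ atTop - ε < σ n :=
      frequently_lt_of_lt_limsup hlo.isCoboundedUnder_le (by linarith)
    have h2 : ∀ᶠ n in atTop, σ n < limsup σ atTop + ε :=
      eventually_lt_of_limsup_lt (by linarith) hup
    refine (h1.and_eventually h2).mono fun n hn => hball ?_
    rw [Metric.mem_ball, Real.dist_eq]
    exact abs_sub_lt_iff.2 ⟨by linarith [hn.1, hn.2], by linarith [hn.1, hn.2]⟩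
  have hclinf : MapClusterPt (liminf σ atTop) atTop σ := by
    rw [mapClusterPt_iff_frequently]
    intro s hs
    obtain ⟨ε, hε, hball⟩ := Metric.mem_nhds_iff.1 hs
    have h1 : ∃ᶠ n in atTop, σ n < liminf σ atTop + ε :=
      frequently_lt_of_liminf_lt hup.isCoboundedUnder_ge (by linarith)
    have h2 : ∀ᶠ n in atTop, liminf σ atTop - ε < σ n :=
      eventually_lt_of_lt_liminf (by linarith) hlo
    refine (h1.and_eventually h2).mono fun n hn => hball ?_
    rw [Metric.mem_ball, Real.dist_eq]
    exact abs_sub_lt_iff.2 ⟨by linarith [hn.1, hn.2], by linarith [hn.1, hn.2]⟩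
  have hσtend : Tendsto σ atTop (nhds ‖sInfty‖) :=
    tendsto_of_liminf_eq_limsup (hcluster _ hclinf) (hcluster _ hclsup) hup hlo
  constructor
  · rw [htI]
    refine Filter.Tendsto.congr' ?_ hσtend.neg
    filter_upwards [eventually_ge_atTop 1] with n hn
    exact (htN n hn).symm
  · have h1 : Tendsto (fun n => P n u - σ n • P n c) atTop (nhds (u - ‖sInfty‖ • c)) :=
      (hPtend u).sub (hσtend.smul (hPtend c))
    have h0 : u - ‖sInfty‖ • c = sInfty := by rw [hudef]; exact add_sub_cancel_right _ _
    rw [← h0]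
    refine Filter.Tendsto.congr' ?_ h1
    filter_upwards [eventually_ge_atTop 1] with n hn
    exact (hrep n hn).symm
end

section
/- Let r 1, r 2, r 3 be pairwise orthogonal unit vectors in H, let t 1, t 2, t 3 ∈ ℝ, and let p, q ∈ H satisfy ⟨r i, p⟩ = cos (t i) and ⟨r i, q⟩ = sin (t i) for i = 1, 2, 3. Then ‖p‖² + ‖q‖² ≥ 3; in particular it is impossible that simultaneously ‖p‖ = 1, ‖q‖ = 1 and ⟨p, q⟩ = 0 (the degenerate Subcase 3b of sound ranging on the sphere is excluded). -/
open RealInnerProductSpace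

lemma bessel3' {H : Type*} [NormedAddCommGroup H] [InnerProductSpace ℝ H]
    (r₁ r₂ r₃ : H)
    (hn1 : ‖r₁‖ = 1) (hn2 : ‖r₂‖ = 1) (hn3 : ‖r₃‖ = 1)
    (h12 : ⟪r₁, r₂⟫ = 0) (h13 : ⟪r₁, r₃⟫ = 0) (h23 : ⟪r₂, r₃⟫ = 0)
    (a b c : ℝ) (p : H)
    (h1 : ⟪r₁, p⟫ = a) (h2 : ⟪r₂, p⟫ = b) (h3 : ⟪r₃, p⟫ = c) :
    a ^ 2 + b ^ 2 + c ^ 2 ≤ ‖p‖ ^ 2 := by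
  have key : (0:ℝ) ≤ ‖p - (a • r₁ + b • r₂ + c • r₃)‖ ^ 2 := by positivity
  rw [← real_inner_self_eq_norm_sq] at key
  have e1 : ⟪r₁, r₁⟫ = 1 := by
    rw [real_inner_self_eq_norm_sq, hn1]; norm_num
  have e2 : ⟪r₂, r₂⟫ = 1 := by
    rw [real_inner_self_eq_norm_sq, hn2]; norm_num
  have e3 : ⟪r₃, r₃⟫ = 1 := by
    rw [real_inner_self_eq_norm_sq, hn3]; norm_num
  have hp : ⟪p, p⟫ = ‖p‖ ^ 2 := real_inner_self_eq_norm_sq p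
  have h1' : ⟪p, r₁⟫ = a := by rw [real_inner_comm]; exact h1
  have h2' : ⟪p, r₂⟫ = b := by rw [real_inner_comm]; exact h2
  have h3' : ⟪p, r₃⟫ = c := by rw [real_inner_comm]; exact h3
  have h12' : ⟪r₂, r₁⟫ = 0 := by rw [real_inner_comm]; exact h12
  have h13' : ⟪r₃, r₁⟫ = 0 := by rw [real_inner_comm]; exact h13
  have h23' : ⟪r₃, r₂⟫ = 0 := by rw [real_inner_comm]; exact h23
  simp only [inner_sub_left, inner_sub_right, inner_add_left, inner_add_right,
    real_inner_smul_left, real_inner_smul_right,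
    h1, h2, h3, h1', h2', h3', h12, h13, h23, h12', h13', h23', e1, e2, e3, hp] at key
  nlinarith [key]

/-- If `r₁, r₂, r₃` are pairwise orthogonal unit vectors and `p, q` satisfy
`⟪rᵢ, p⟫ = cos tᵢ`, `⟪rᵢ, q⟫ = sin tᵢ`, then `‖p‖² + ‖q‖² ≥ 3`; in particular it
is impossible that `‖p‖ = 1`, `‖q‖ = 1` and `⟪p, q⟫ = 0` simultaneously. -/
theorem sphere_subcase3b_excluded
    {H : Type*} [NormedAddCommGroup H] [InnerProductSpace ℝ H] [CompleteSpace H]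
    (r₁ r₂ r₃ : H)
    (hn1 : ‖r₁‖ = 1) (hn2 : ‖r₂‖ = 1) (hn3 : ‖r₃‖ = 1)
    (h12 : ⟪r₁, r₂⟫ = 0) (h13 : ⟪r₁, r₃⟫ = 0) (h23 : ⟪r₂, r₃⟫ = 0)
    (t₁ t₂ t₃ : ℝ) (p q : H)
    (hp1 : ⟪r₁, p⟫ = Real.cos t₁) (hp2 : ⟪r₂, p⟫ = Real.cos t₂)
    (hp3 : ⟪r₃, p⟫ = Real.cos t₃)
    (hq1 : ⟪r₁, q⟫ = Real.sin t₁) (hq2 : ⟪r₂, q⟫ = Real.sin t₂)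
    (hq3 : ⟪r₃, q⟫ = Real.sin t₃) :
    3 ≤ ‖p‖ ^ 2 + ‖q‖ ^ 2 ∧ ¬(‖p‖ = 1 ∧ ‖q‖ = 1 ∧ ⟪p, q⟫ = 0) := by
  have Bp := bessel3' r₁ r₂ r₃ hn1 hn2 hn3 h12 h13 h23 _ _ _ p hp1 hp2 hp3
  have Bq := bessel3' r₁ r₂ r₃ hn1 hn2 hn3 h12 h13 h23 _ _ _ q hq1 hq2 hq3
  have s1 := Real.sin_sq_add_cos_sq t₁
  have s2 := Real.sin_sq_add_cos_sq t₂
  have s3 := Real.sin_sq_add_cos_sq t₃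
  have main : 3 ≤ ‖p‖ ^ 2 + ‖q‖ ^ 2 := by nlinarith
  refine ⟨main, ?_⟩
  rintro ⟨h1, h2, -⟩
  rw [h1, h2] at main; norm_num at main
end

section
/- Let (e k)_{k ≥ 1} be an orthonormal family in H whose linear span is dense (an orthonormal basis). Define sensors r 0 = 0, r k = (1/k) · e k for k ≥ 1, and times t 0 = 0, t k = −π/√6 + √(π²/6 + 3/k²) for k ≥ 1. Then the pair (s', t') with s' = −Σ_{k≥1} (1/k) e k and t' = −π/√6 solves the sound ranging problem (t k = t' + ‖r k − s'‖ for all k ∈ ℕ), and there exists another pair (s'', t'') with (s'', t'') ≠ (s', t') which also solves it: t k = t'' + ‖r k − s''‖ for all k ∈ ℕ. Hence the sound ranging problem can have two distinct solutions even when the sensors form a basis of H. -/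
open RealInnerProductSpace

namespace SRPaux

noncomputable def P : ℝ := Real.pi ^ 2 / 6
noncomputable def Q : ℝ := Real.sqrt P
noncomputable def R : ℝ := Real.sqrt (P + 3)
noncomputable def tau (j : ℕ) : ℝ := Real.sqrt (P + 3 * (1 / ((j : ℝ) + 1)) ^ 2) - Q
noncomputable def B (j : ℕ) : ℝ := ((j : ℝ) + 1) * tau j
noncomputable def T : ℝ := ∑' j, tau j
noncomputable def S2 : ℝ := ∑' j, (B j) ^ 2
noncomputable def N : ℝ := (-2 * T + Q * S2 + Q) / (S2 - 1)

lemma hP1 : 1 < P := by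
  have := Real.pi_gt_three
  unfold P; nlinarith

lemma hPpos : 0 < P := lt_trans one_pos hP1

lemma hQpos : 0 < Q := Real.sqrt_pos.mpr hPpos

lemma hQ : Q ^ 2 = P := Real.sq_sqrt hPpos.le

lemma hRpos : 0 < R := Real.sqrt_pos.mpr (by linarith [hPpos])

lemma hR : R ^ 2 = P + 3 := Real.sq_sqrt (by linarith [hPpos])

lemma hQpi : Q = Real.pi / Real.sqrt 6 := by
  rw [Q, P, Real.sqrt_div (sq_nonneg Real.pi), Real.sqrt_sq Real.pi_pos.le]

lemma basel : HasSum (fun j : ℕ => (1 / ((j : ℝ) + 1)) ^ 2) P := by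
  have h := hasSum_zeta_two
  have key : ∀ n : ℕ, n ∉ Set.range Nat.succ → (1:ℝ)/(n:ℝ)^2 = 0 := by
    intro n hn
    have : n = 0 := by by_contra h0; exact hn ⟨n-1, by omega⟩
    simp [this]
  have h2 := (Function.Injective.hasSum_iff Nat.succ_injective key).mpr h
  have heq : (fun j : ℕ => (1/((j:ℝ)+1))^2) = (fun n : ℕ => (1:ℝ)/(n:ℝ)^2) ∘ Nat.succ := by
    funext j
    simp only [Function.comp]
    push_cast
    rw [div_pow, one_pow]
  rw [P, heq]
  exact h2


lemma hτ (j : ℕ) : 0 ≤ tau j := by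
  have h : Q ≤ Real.sqrt (P + 3 * (1 / ((j : ℝ) + 1)) ^ 2) := by
    rw [Q]; exact Real.sqrt_le_sqrt (by nlinarith [sq_nonneg (1/((j:ℝ)+1))])
  simpa [tau] using h

lemma hτQ (j : ℕ) : (tau j + Q) ^ 2 = P + 3 * (1 / ((j : ℝ) + 1)) ^ 2 := by
  rw [tau, sub_add_cancel]
  exact Real.sq_sqrt (by nlinarith [hPpos, sq_nonneg (1/((j:ℝ)+1))])

lemma hτid (j : ℕ) : tau j ^ 2 + 2 * Q * tau j = 3 * (1 / ((j : ℝ) + 1)) ^ 2 := by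
  have h := hτQ j
  have := hQ
  nlinarith

lemma hτR (j : ℕ) : tau j + Q ≤ R := by
  have h1 : P + 3 * (1 / ((j : ℝ) + 1)) ^ 2 ≤ P + 3 := by
    have hj : (1:ℝ) ≤ ((j:ℝ)+1) := by
      have := Nat.cast_nonneg (α := ℝ) j
      linarith
    have : (1 / ((j : ℝ) + 1)) ^ 2 ≤ 1 := by
      rw [div_pow, one_pow, div_le_one (by nlinarith)]
      nlinarith
    nlinarith
  have : Real.sqrt (P + 3 * (1 / ((j : ℝ) + 1)) ^ 2) ≤ R := by
    rw [R]; exact Real.sqrt_le_sqrt h1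
  simpa [tau, sub_add_cancel] using this

lemma hτub (j : ℕ) : tau j ≤ 3 / (2 * Q) * (1 / ((j : ℝ) + 1)) ^ 2 := by
  rw [div_mul_eq_mul_div, le_div_iff₀ (by linarith [hQpos])]
  nlinarith [hτid j, sq_nonneg (tau j)]

lemma hτlb (j : ℕ) : 3 / (R + Q) * (1 / ((j : ℝ) + 1)) ^ 2 ≤ tau j := by
  rw [div_mul_eq_mul_div, div_le_iff₀ (by linarith [hQpos, hRpos])]
  nlinarith [hτid j, mul_nonneg (hτ j) (sub_nonneg.2 (hτR j)), hτ j]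

lemma hj1 (j : ℕ) : (0:ℝ) < (j:ℝ) + 1 := by positivity

lemma hB0 (j : ℕ) : 0 ≤ B j := mul_nonneg (hj1 j).le (hτ j)

lemma hBub (j : ℕ) : B j ≤ 3 / (2 * Q) * (1 / ((j : ℝ) + 1)) := by
  have h := mul_le_mul_of_nonneg_left (hτub j) (hj1 j).le
  calc B j ≤ ((j:ℝ)+1) * (3 / (2 * Q) * (1 / ((j : ℝ) + 1)) ^ 2) := h
    _ = 3 / (2 * Q) * (1 / ((j : ℝ) + 1)) := by
        have hQ0 : Q ≠ 0 := hQpos.ne'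
        have hj0 : ((j:ℝ)+1) ≠ 0 := (hj1 j).ne'
        field_simp

lemma hBlb (j : ℕ) : 3 / (R + Q) * (1 / ((j : ℝ) + 1)) ≤ B j := by
  have h := mul_le_mul_of_nonneg_left (hτlb j) (hj1 j).le
  calc 3 / (R + Q) * (1 / ((j : ℝ) + 1))
      = ((j:ℝ)+1) * (3 / (R + Q) * (1 / ((j : ℝ) + 1)) ^ 2) := by
        have hRQ0 : R + Q ≠ 0 := by nlinarith [hQpos, hRpos]
        have hj0 : ((j:ℝ)+1) ≠ 0 := (hj1 j).ne'
        field_simp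
    _ ≤ B j := h

lemma huB (j : ℕ) : (1 / ((j : ℝ) + 1)) * B j = tau j := by
  rw [B]
  field_simp

lemma hsumτ : Summable tau :=
  Summable.of_nonneg_of_le hτ hτub ((basel.summable).mul_left _)

lemma hsumB2 : Summable (fun j => B j ^ 2) := by
  refine Summable.of_nonneg_of_le (fun j => sq_nonneg _) (fun j => ?_)
    (((basel.summable).mul_left ((3 / (2*Q))^2)))
  calc B j ^ 2 ≤ (3 / (2 * Q) * (1 / ((j : ℝ) + 1))) ^ 2 := by
        have := hBub j
        have := hB0 j
        nlinarith
    _ = (3 / (2*Q))^2 * (1 / ((j : ℝ) + 1)) ^ 2 := by ring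

lemma hT : Q < T := by
  have hb : ∀ j : ℕ, 3 / (R + Q) * (1 / ((j : ℝ) + 1)) ^ 2 ≤ tau j := hτlb
  have h1 : 3 / (R + Q) * P ≤ T := by
    have := Summable.tsum_le_tsum hb ((basel.summable).mul_left (3 / (R+Q))) hsumτ
    calc 3 / (R + Q) * P = ∑' j : ℕ, 3 / (R + Q) * (1 / ((j : ℝ) + 1)) ^ 2 := by
          rw [tsum_mul_left, basel.tsum_eq]
      _ ≤ T := this
  have h2 : Q < 3 / (R + Q) * P := by
    rw [div_mul_eq_mul_div, lt_div_iff₀ (by linarith [hQpos, hRpos])]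
    have hQR : (Q * R) ^ 2 = P * (P + 3) := by
      rw [mul_pow, hQ, hR]
    have hQRpos : 0 < Q * R := mul_pos hQpos hRpos
    nlinarith [hP1, hQ, sq_nonneg (2 * P - Q * R)]
  linarith

lemma hS2 : 1 < S2 := by
  have hb : ∀ j : ℕ, (3 / (R + Q) * (1 / ((j : ℝ) + 1))) ^ 2 ≤ B j ^ 2 := by
    intro j
    have h1 := hBlb j
    have h2 : 0 ≤ 3 / (R + Q) * (1 / ((j : ℝ) + 1)) := by
      have := hQpos; have := hRpos; have := hj1 j
      positivity
    nlinarith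
  have h1 : (3 / (R + Q)) ^ 2 * P ≤ S2 := by
    have heq : ∀ j : ℕ, (3 / (R + Q) * (1 / ((j : ℝ) + 1))) ^ 2
        = (3 / (R + Q)) ^ 2 * (1 / ((j : ℝ) + 1)) ^ 2 := fun j => by ring
    have := Summable.tsum_le_tsum hb
      ((basel.summable.mul_left ((3 / (R+Q))^2)).congr (fun j => (heq j).symm)) hsumB2
    calc (3 / (R + Q)) ^ 2 * P = ∑' j : ℕ, (3 / (R + Q) * (1 / ((j : ℝ) + 1))) ^ 2 := by
          simp only [heq]
          rw [tsum_mul_left, basel.tsum_eq]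
      _ ≤ S2 := this
  have h2 : 1 < (3 / (R + Q)) ^ 2 * P := by
    rw [div_pow, div_mul_eq_mul_div, lt_div_iff₀ (by nlinarith [hQpos, hRpos])]
    have hQR : (Q * R) ^ 2 = P * (P + 3) := by rw [mul_pow, hQ, hR]
    have hQRpos : 0 < Q * R := mul_pos hQpos hRpos
    nlinarith [hP1, hQ, hR, sq_nonneg (7 * P - 3 - 2 * Q * R), hQpos, hRpos,
      sq_nonneg (Q - R), sq_nonneg (Q + R)]
  linarith


noncomputable def sig (x : ℝ) (j : ℕ) : ℝ := -(1 / ((j : ℝ) + 1)) + x * B j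

lemma sig_pt (x : ℝ) (j : ℕ) :
    sig x j ^ 2 = (1 / ((j : ℝ) + 1)) ^ 2 + (x ^ 2 * B j ^ 2 - 2 * x * tau j) := by
  have h := huB j
  rw [sig]
  linear_combination (-2 * x) * h

lemma sig_sq_summable (x : ℝ) : Summable (fun j => sig x j ^ 2) := by
  have h : Summable (fun j : ℕ => (1 / ((j : ℝ) + 1)) ^ 2 + (x ^ 2 * B j ^ 2 - 2 * x * tau j)) :=
    basel.summable.add ((hsumB2.mul_left _).sub (hsumτ.mul_left _))
  exact h.congr (fun j => (sig_pt x j).symm)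

lemma sig_tsum (x : ℝ) : ∑' j, sig x j ^ 2 = P + (x ^ 2 * S2 - 2 * x * T) := by
  unfold S2 T
  rw [tsum_congr (sig_pt x),
    Summable.tsum_add basel.summable ((hsumB2.mul_left _).sub (hsumτ.mul_left _)), basel.tsum_eq,
    Summable.tsum_sub (hsumB2.mul_left _) (hsumτ.mul_left _), tsum_mul_left, tsum_mul_left]

lemma hNdef : N * (S2 - 1) = -2 * T + Q * S2 + Q := by
  have h1 : S2 - 1 ≠ 0 := by nlinarith [hS2]
  rw [N]
  field_simp

lemma hNlt : N < Q := by
  have h := hS2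
  have hT' := hT
  have h1 : S2 - 1 ≠ 0 := by nlinarith [hS2]
  have hx : N - Q = 2 * (Q - T) / (S2 - 1) := by
    rw [N, div_sub' h1, div_eq_div_iff h1 h1]
    ring
  have : 2 * (Q - T) / (S2 - 1) < 0 :=
    div_neg_of_neg_of_pos (by linarith) (by linarith)
  linarith

lemma hN0 : 0 ≤ N := by
  have hg : 0 ≤ P + (Q ^ 2 * S2 - 2 * Q * T) := by
    rw [← sig_tsum Q]
    exact tsum_nonneg (fun j => sq_nonneg _)
  have h1 : S2 - 1 ≠ 0 := by nlinarith [hS2]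
  have hrep : N = (P + (Q ^ 2 * S2 - 2 * Q * T)) / (Q * (S2 - 1)) := by
    rw [N, ← hQ]
    rw [div_eq_div_iff h1 (show Q * (S2 - 1) ≠ 0 by nlinarith [hQpos, hS2])]
    ring
  rw [hrep]
  exact div_nonneg hg (show (0:ℝ) < Q * (S2 - 1) by nlinarith [hQpos, hS2]).le

lemma hgN : P + ((Q - N) ^ 2 * S2 - 2 * (Q - N) * T) = N ^ 2 := by
  have hx : (Q - N) * (S2 - 1) = 2 * T - 2 * Q := by linear_combination -hNdef
  linear_combination (-1 : ℝ) * hQ + (Q - N) * hx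

variable {H : Type*} [NormedAddCommGroup H] [InnerProductSpace ℝ H]

lemma spike (v : ℕ → H) (k : ℕ) (a : ℝ) :
    HasSum (fun j => (if j = k then a else 0) • v j) (a • v k) := by
  have h : HasSum (fun j : ℕ => if j = k then a • v k else 0) (a • v k) := hasSum_ite_eq k _
  refine h.congr_fun fun j => ?_
  by_cases hj : j = k <;> simp [hj]

lemma parseval {v : ℕ → H} (hv : Orthonormal ℝ v) (c : ℕ → ℝ) {x : H}
    (hx : HasSum (fun j => c j • v j) x) : ‖x‖ ^ 2 = ∑' j, c j ^ 2 := by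
  have hv' := orthonormal_iff_ite.mp hv
  have hcoef : ∀ i, ⟪v i, x⟫ = c i := by
    intro i
    have h1 := (innerSL ℝ (v i)).hasSum hx
    have h2 : HasSum (fun j : ℕ => if j = i then c i else 0) ⟪v i, x⟫ := by
      refine h1.congr_fun fun j => ?_
      simp only [innerSL_apply_apply, real_inner_smul_right, hv']
      by_cases hj : j = i
      · simp [hj]
      · simp [hj, Ne.symm hj]
    exact ((hasSum_ite_eq i (c i)).unique h2).symm
  have hxx : HasSum (fun j => c j ^ 2) ⟪x, x⟫ := by
    have h1 := (innerSL ℝ x).hasSum hx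
    refine h1.congr_fun fun j => ?_
    simp only [innerSL_apply_apply, real_inner_smul_right]
    rw [real_inner_comm, hcoef j]
    ring
  rw [← real_inner_self_eq_norm_sq]
  exact hxx.tsum_eq.symm

lemma exists_rep [CompleteSpace H] (b : HilbertBasis ℕ ℝ H) (c : ℕ → ℝ)
    (hc : Summable fun j => c j ^ 2) : ∃ x : H, HasSum (fun j => c j • (b j : H)) x := by
  have hm : Memℓp c 2 := by
    apply memℓp_gen
    have : (2 : ENNReal).toReal = 2 := by norm_num
    rw [this]
    simpa [Real.norm_eq_abs, sq_abs] using hc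
  refine ⟨b.repr.symm ⟨c, hm⟩, ?_⟩
  have h := b.hasSum_repr (b.repr.symm ⟨c, hm⟩)
  simpa using h

lemma tsum_spike_sq (c : ℕ → ℝ) (hc : Summable fun j => c j ^ 2) (k : ℕ) (a : ℝ) :
    ∑' j, (c j + (if j = k then a else 0)) ^ 2 = (∑' j, c j ^ 2) + (2 * c k * a + a ^ 2) := by
  have h2 : Summable (fun j : ℕ =>
      2 * c j * (if j = k then a else 0) + (if j = k then a else 0) ^ 2) := by
    apply summable_of_ne_finset_zero (s := {k})
    intro j hj
    simp only [Finset.mem_singleton] at hj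
    simp [hj]
  have hpt : ∀ j : ℕ, (c j + (if j = k then a else 0)) ^ 2
      = c j ^ 2 + (2 * c j * (if j = k then a else 0) + (if j = k then a else 0) ^ 2) := by
    intro j
    ring
  rw [tsum_congr hpt, Summable.tsum_add hc h2]
  congr 1
  rw [tsum_eq_single k (by intro j hj; simp [hj])]
  simp

lemma hPdef : P = Real.pi ^ 2 / 6 := rfl

lemma sig_def (x : ℝ) (j : ℕ) : sig x j = -(1 / ((j : ℝ) + 1)) + x * B j := rfl

lemma hsqrt_tau (j : ℕ) : Real.sqrt (P + 3 * (1 / ((j : ℝ) + 1)) ^ 2) = tau j + Q := by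
  rw [tau, sub_add_cancel]

end SRPaux




open SRPaux

/-- With sensors `r k = (1/k) • e k` (an orthonormal basis scaled) and the arrival
times generated by the source `s' = -∑ (1/k) e k` emitting at `t' = -π/√6`, the
sound ranging problem has the solution `(s', t')` and also another, distinct
solution `(s'', t'')`. -/
theorem srp_two_solutions_example
    {H : Type*} [NormedAddCommGroup H] [InnerProductSpace ℝ H] [CompleteSpace H]
    (e : ℕ → H)
    (he : Orthonormal ℝ (fun k : ℕ => e (k + 1)))
    (hdense : Dense (Submodule.span ℝ (Set.range fun k : ℕ => e (k + 1)) : Set H))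
    (r : ℕ → H) (hr : ∀ k : ℕ, r k = ((k : ℝ)⁻¹) • e k)
    (t : ℕ → ℝ) (ht0 : t 0 = 0)
    (ht : ∀ k : ℕ, 1 ≤ k →
      t k = -(Real.pi / Real.sqrt 6) + Real.sqrt (Real.pi ^ 2 / 6 + 3 / (k : ℝ) ^ 2))
    (s' : H) (hs' : s' = -∑' k : ℕ, ((k : ℝ)⁻¹) • e k)
    (t' : ℝ) (ht' : t' = -(Real.pi / Real.sqrt 6)) :
    (∀ k : ℕ, t k = t' + ‖r k - s'‖) ∧
      ∃ (s'' : H) (t'' : ℝ), (s'', t'') ≠ (s', t') ∧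
        ∀ k : ℕ, t k = t'' + ‖r k - s''‖ := by
  have hsp : ⊤ ≤ (Submodule.span ℝ (Set.range fun k : ℕ => e (k + 1))).topologicalClosure :=
    (Submodule.dense_iff_topologicalClosure_eq_top.mp hdense).ge
  let b : HilbertBasis ℕ ℝ H := HilbertBasis.mk he hsp
  have hb : ∀ j : ℕ, (b j : H) = e (j + 1) := fun j =>
    congrFun (HilbertBasis.coe_mk he hsp) j
  have hsc : ∀ j : ℕ, (((j + 1 : ℕ) : ℝ))⁻¹ = 1 / ((j : ℝ) + 1) := by
    intro j
    push_cast
    rw [one_div]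
  have hr0 : r 0 = 0 := by rw [hr]; norm_num
  -- the vector u = ∑ (1/(j+1)) e (j+1)
  obtain ⟨u, hu⟩ := exists_rep b (fun j => 1 / ((j : ℝ) + 1)) basel.summable
  have hu' : HasSum (fun j : ℕ => (1 / ((j : ℝ) + 1)) • e (j + 1)) u := by
    simpa [hb] using hu
  have hsum_s : HasSum (fun k : ℕ => ((k : ℝ))⁻¹ • e k) u := by
    have key : ∀ n : ℕ, n ∉ Set.range Nat.succ → ((n : ℝ))⁻¹ • e n = 0 := by
      intro n hn
      have : n = 0 := by by_contra h0; exact hn ⟨n - 1, by omega⟩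
      simp [this]
    refine (Function.Injective.hasSum_iff Nat.succ_injective key).mp ?_
    refine hu'.congr_fun fun j => ?_
    show (((j + 1 : ℕ) : ℝ))⁻¹ • e (j + 1) = _
    rw [hsc j]
  have hs'_eq : s' = -u := by rw [hs', hsum_s.tsum_eq]
  have hnormu : ‖u‖ ^ 2 = P := by
    rw [parseval he _ hu', basel.tsum_eq]
  have hnormu' : ‖u‖ = Q := by
    rw [← Real.sqrt_sq (norm_nonneg u), hnormu]
    rfl
  -- norms of r (j+1) - s'
  have hnorm1 : ∀ j : ℕ, ‖r (j + 1) - s'‖ = tau j + Q := by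
    intro j
    have hadd : HasSum
        (fun i : ℕ => ((1 / ((i : ℝ) + 1)) + (if i = j then 1 / ((j : ℝ) + 1) else 0)) • e (i + 1))
        (u + (1 / ((j : ℝ) + 1)) • e (j + 1)) := by
      refine (hu'.add (spike (fun i : ℕ => e (i + 1)) j (1 / ((j : ℝ) + 1)))).congr_fun
        fun i => ?_
      rw [add_smul]
    have hns : ‖u + (1 / ((j : ℝ) + 1)) • e (j + 1)‖ ^ 2 = P + 3 * (1 / ((j : ℝ) + 1)) ^ 2 := by
      rw [parseval he _ hadd, tsum_spike_sq _ basel.summable j _, basel.tsum_eq]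
      ring
    have hrs : r (j + 1) - s' = u + (1 / ((j : ℝ) + 1)) • e (j + 1) := by
      rw [hr, hs'_eq, sub_neg_eq_add, hsc j, add_comm]
    rw [hrs, ← Real.sqrt_sq (norm_nonneg (u + (1 / ((j : ℝ) + 1)) • e (j + 1))), hns,
      hsqrt_tau j]
  have part1 : ∀ k : ℕ, t k = t' + ‖r k - s'‖ := by
    intro k
    cases k with
    | zero =>
      rw [ht0, ht', hr0, hs'_eq, zero_sub, neg_neg, hnormu', hQpi]
      ring
    | succ j =>
      rw [ht (j + 1) (by omega), ht', hnorm1 j]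
      have harg : Real.pi ^ 2 / 6 + 3 / (((j + 1 : ℕ) : ℝ)) ^ 2
          = P + 3 * (1 / ((j : ℝ) + 1)) ^ 2 := by
        rw [hPdef]
        push_cast
        rw [div_pow, one_pow, mul_div_assoc']
        ring_nf
      rw [harg, hsqrt_tau j, hQpi]
  refine ⟨part1, ?_⟩
  -- second solution
  obtain ⟨w, hw⟩ := exists_rep b (sig (Q - N)) (sig_sq_summable (Q - N))
  have hw' : HasSum (fun j : ℕ => sig (Q - N) j • e (j + 1)) w := by
    simpa [hb] using hw
  have htsσ : ∑' j : ℕ, sig (Q - N) j ^ 2 = N ^ 2 := by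
    rw [sig_tsum (Q - N)]
    exact hgN
  have hnw2 : ‖w‖ ^ 2 = N ^ 2 := by rw [parseval he _ hw', htsσ]
  have hnw : ‖w‖ = N := by
    rw [← Real.sqrt_sq (norm_nonneg w), hnw2, Real.sqrt_sq hN0]
  refine ⟨w, -N, ?_, ?_⟩
  · intro hcontra
    have h2 : -N = t' := congrArg Prod.snd hcontra
    rw [ht', ← hQpi] at h2
    exact hNlt.ne (neg_injective h2)
  · intro k
    cases k with
    | zero =>
      rw [ht0, hr0, zero_sub, norm_neg, hnw]
      ring
    | succ j =>
      have hadd : HasSum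
          (fun i : ℕ => ((-(sig (Q - N) i)) + (if i = j then 1 / ((j : ℝ) + 1) else 0)) • e (i + 1))
          (-w + (1 / ((j : ℝ) + 1)) • e (j + 1)) := by
        refine ((hw'.neg).add (spike (fun i : ℕ => e (i + 1)) j (1 / ((j : ℝ) + 1)))).congr_fun
          fun i => ?_
        rw [add_smul, neg_smul]
      have hsumneg : Summable (fun i : ℕ => (-(sig (Q - N) i)) ^ 2) :=
        (sig_sq_summable (Q - N)).congr fun i => (neg_sq _).symm
      have htsneg : ∑' i : ℕ, (-(sig (Q - N) i)) ^ 2 = N ^ 2 := by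
        rw [tsum_congr (fun i => neg_sq (sig (Q - N) i)), htsσ]
      have hns : ‖-w + (1 / ((j : ℝ) + 1)) • e (j + 1)‖ ^ 2 = (tau j + N) ^ 2 := by
        rw [parseval he _ hadd, tsum_spike_sq _ hsumneg j _, htsneg, sig_def]
        have h2 := huB j
        have h3 := hτid j
        linear_combination (-2 * (Q - N)) * h2 + (-1 : ℝ) * h3
      have hrs : r (j + 1) - w = -w + (1 / ((j : ℝ) + 1)) • e (j + 1) := by
        rw [hr, hsc j, sub_eq_neg_add]
      have hnrm : ‖r (j + 1) - w‖ = tau j + N := by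
        rw [hrs, ← Real.sqrt_sq (norm_nonneg (-w + (1 / ((j : ℝ) + 1)) • e (j + 1))), hns,
          Real.sqrt_sq (by linarith [hτ j, hN0])]
      rw [ht (j + 1) (by omega), hnrm]
      have harg : Real.pi ^ 2 / 6 + 3 / (((j + 1 : ℕ) : ℝ)) ^ 2
          = P + 3 * (1 / ((j : ℝ) + 1)) ^ 2 := by
        rw [hPdef]
        push_cast
        rw [div_pow, one_pow, mul_div_assoc']
        ring_nf
      rw [harg, hsqrt_tau j, hQpi]
      ring
end

section
/- Let (e k)_{k ≥ 1} be an orthonormal family in H whose linear span is dense (an orthonormal basis), let E = { x ∈ H : (1/2)·⟨e 1, x⟩² + Σ_{k ≥ 2} ⟨e k, x⟩² = 1 }, and set s' = −e 1, s'' = e 1. Then for every x ∈ E one has ‖x − s'‖ + ‖x − s''‖ = 2√2 (the set E is an 'ellipsoid' with focuses s' and s''). -/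
open RealInnerProductSpace

/-- The 'ellipsoid' `E = {x : (1/2)⟪e 1, x⟫² + ∑_{k ≥ 2} ⟪e k, x⟫² = 1}` has
focuses `-e 1` and `e 1`: every `x ∈ E` satisfies
`‖x - (-e 1)‖ + ‖x - e 1‖ = 2√2`. -/
theorem ellipsoid_focuses
    {H : Type*} [NormedAddCommGroup H] [InnerProductSpace ℝ H] [CompleteSpace H]
    (e : ℕ → H)
    (he : Orthonormal ℝ (fun k : ℕ => e (k + 1)))
    (hdense : Dense (Submodule.span ℝ (Set.range fun k : ℕ => e (k + 1)) : Set H))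
    (x : H)
    (hx : (1 / 2) * ⟪e 1, x⟫ ^ 2 + ∑' k : ℕ, ⟪e (k + 2), x⟫ ^ 2 = 1) :
    ‖x - (-(e 1))‖ + ‖x - e 1‖ = 2 * Real.sqrt 2 := by
  have hsp : ⊤ ≤ (Submodule.span ℝ (Set.range fun k : ℕ => e (k + 1))).topologicalClosure :=
    (Submodule.dense_iff_topologicalClosure_eq_top.mp hdense).ge
  let b : HilbertBasis ℕ ℝ H := HilbertBasis.mk he hsp
  have hbcoe : ⇑b = fun k : ℕ => e (k + 1) := HilbertBasis.coe_mk he hsp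
  have hsum : Summable fun k : ℕ => ⟪x, e (k + 1)⟫ * ⟪e (k + 1), x⟫ := by
    have h := b.summable_inner_mul_inner x x
    rwa [hbcoe] at h
  have hts : ∑' k : ℕ, ⟪x, e (k + 1)⟫ * ⟪e (k + 1), x⟫ = ⟪x, x⟫ := by
    have h := b.tsum_inner_mul_inner x x
    rwa [hbcoe] at h
  have hsq : ∀ k : ℕ, ⟪x, e (k + 1)⟫ * ⟪e (k + 1), x⟫ = ⟪e (k + 1), x⟫ ^ 2 := by
    intro k; rw [real_inner_comm]; ring
  have hsum' : Summable fun k : ℕ => ⟪e (k + 1), x⟫ ^ 2 := by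
    simpa only [hsq] using hsum
  have hts' : ∑' k : ℕ, ⟪e (k + 1), x⟫ ^ 2 = ‖x‖ ^ 2 := by
    rw [← real_inner_self_eq_norm_sq, ← hts]
    exact tsum_congr fun k => (hsq k).symm
  clear_value b
  clear hbcoe hsum hts hsq b hsp
  have hsplit : ⟪e 1, x⟫ ^ 2 + ∑' k : ℕ, ⟪e (k + 2), x⟫ ^ 2 = ‖x‖ ^ 2 := by
    rw [← hts', Summable.tsum_eq_zero_add hsum']
  set a := ⟪e 1, x⟫ with ha
  have hSnn : 0 ≤ ∑' k : ℕ, ⟪e (k + 2), x⟫ ^ 2 :=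
    tsum_nonneg fun k => sq_nonneg _
  have ha2 : a ^ 2 ≤ 2 := by nlinarith
  have hnx : ‖x‖ ^ 2 = 1 + (1 / 2) * a ^ 2 := by linarith
  have he1 : ‖e 1‖ = 1 := he.1 0
  have haabs : |a| ≤ Real.sqrt 2 := by
    rw [← Real.sqrt_sq_eq_abs]
    exact Real.sqrt_le_sqrt ha2
  have hab : -Real.sqrt 2 ≤ a ∧ a ≤ Real.sqrt 2 := abs_le.mp haabs
  have h2 : (0:ℝ) < Real.sqrt 2 := Real.sqrt_pos.mpr (by norm_num)
  have hs2 : Real.sqrt 2 ^ 2 = 2 := Real.sq_sqrt (by norm_num)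
  have hle2 : Real.sqrt 2 ≤ 2 := by nlinarith
  have hn1 : ‖x - (-(e 1))‖ = (2 + a) / Real.sqrt 2 := by
    have key : ‖x - (-(e 1))‖ ^ 2 = ((2 + a) / Real.sqrt 2) ^ 2 := by
      rw [sub_neg_eq_add, ← real_inner_self_eq_norm_sq, inner_add_add_self,
        real_inner_self_eq_norm_sq, real_inner_self_eq_norm_sq, he1, real_inner_comm, ← ha,
        div_pow, hs2]
      nlinarith
    have hpos : 0 ≤ (2 + a) / Real.sqrt 2 := by
      apply div_nonneg _ h2.le
      nlinarith [hab.1]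
    calc ‖x - (-(e 1))‖ = Real.sqrt (‖x - (-(e 1))‖ ^ 2) := (Real.sqrt_sq (norm_nonneg _)).symm
      _ = Real.sqrt (((2 + a) / Real.sqrt 2) ^ 2) := by rw [key]
      _ = (2 + a) / Real.sqrt 2 := Real.sqrt_sq hpos
  have hn2 : ‖x - e 1‖ = (2 - a) / Real.sqrt 2 := by
    have key : ‖x - e 1‖ ^ 2 = ((2 - a) / Real.sqrt 2) ^ 2 := by
      rw [← real_inner_self_eq_norm_sq, inner_sub_sub_self,
        real_inner_self_eq_norm_sq, real_inner_self_eq_norm_sq, he1, real_inner_comm, ← ha,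
        div_pow, hs2]
      nlinarith
    have hpos : 0 ≤ (2 - a) / Real.sqrt 2 := by
      apply div_nonneg _ h2.le
      nlinarith [hab.2]
    calc ‖x - e 1‖ = Real.sqrt (‖x - e 1‖ ^ 2) := (Real.sqrt_sq (norm_nonneg _)).symm
      _ = Real.sqrt (((2 - a) / Real.sqrt 2) ^ 2) := by rw [key]
      _ = (2 - a) / Real.sqrt 2 := Real.sqrt_sq hpos
  rw [hn1, hn2]
  field_simp
  nlinarith
end

section
/- Let (e i)_{i ≥ 1} be an orthonormal family in H whose linear span is dense (an orthonormal basis). Then for every infinite subset S ⊆ {2, 3, 4, …} there is no pair (s, t) with s in the closed linear span of {e i : i ∈ S} such that 0 = t + ‖s‖ and √2 − 1 = t + ‖e i − s‖ for all i ∈ S. (The truncated sound ranging problem obtained by keeping only the sensors 0 and {e i : i ∈ S}, with the arrival times generated by the source e 1 emitting at time −1, has no solution inside the closed span of the kept sensors.) -/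
open RealInnerProductSpace

/-- The truncated sound ranging problem obtained by keeping only the sensors `0`
and `{e i : i ∈ S}` (with `S ⊆ {2, 3, ...}` infinite), with arrival times
generated by the source `e 1` emitting at time `-1`, has no solution inside the
closed span of the kept sensors. -/
theorem srp_truncated_no_solution
    {H : Type*} [NormedAddCommGroup H] [InnerProductSpace ℝ H] [CompleteSpace H]
    (e : ℕ → H)
    (he : Orthonormal ℝ (fun i : ℕ => e (i + 1)))
    (hdense : Dense (Submodule.span ℝ (Set.range fun i : ℕ => e (i + 1)) : Set H))
    (S : Set ℕ) (hS2 : ∀ i ∈ S, 2 ≤ i) (hSinf : S.Infinite) :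
    ¬ ∃ (s : H) (t : ℝ),
        s ∈ closure (Submodule.span ℝ (e '' S) : Set H) ∧
        0 = t + ‖s‖ ∧
        ∀ i ∈ S, Real.sqrt 2 - 1 = t + ‖e i - s‖ := by
  rintro ⟨s, t, hmem, h0, hi⟩
  have ht : t = -‖s‖ := by linarith
  set c : ℝ := Real.sqrt 2 - 1 + ‖s‖ with hc
  clear_value c
  have hnorm : ∀ i ∈ S, ‖e i - s‖ = c := by
    intro i hiS
    have := hi i hiS
    rw [ht] at this
    simp only [hc]; linarith
  have hunit : ∀ i ∈ S, ‖e i‖ = 1 := by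
    intro i hiS
    have h2 := hS2 i hiS
    have : e i = e ((i - 1) + 1) := by congr 1; omega
    rw [this]
    exact he.1 (i - 1)
  set a : ℝ := (1 + ‖s‖ ^ 2 - c ^ 2) / 2 with ha
  clear_value a
  have hinner : ∀ i ∈ S, ⟪e i, s⟫ = a := by
    intro i hiS
    have h1 : ‖e i - s‖ ^ 2 = ‖e i‖ ^ 2 - 2 * ⟪e i, s⟫ + ‖s‖ ^ 2 := by
      rw [@norm_sub_sq_real]
    rw [hnorm i hiS, hunit i hiS] at h1
    norm_num at h1
    simp only [ha]; linarith
  -- a = 0 by Bessel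
  have ha0 : a = 0 := by
    by_contra hane
    have hapos : 0 < a ^ 2 := by positivity
    obtain ⟨n, hn⟩ := exists_nat_gt (‖s‖ ^ 2 / a ^ 2)
    -- pick a finite subset of S of cardinality n, shifted down by 1
    obtain ⟨F, hFS, hFcard⟩ := hSinf.exists_subset_card_eq n
    set F' : Finset ℕ := F.image (· - 1) with hF'
    have hF'card : F'.card = n := by
      rw [hF', Finset.card_image_of_injOn, hFcard]
      intro x hx y hy hxy
      have := hS2 x (hFS hx); have := hS2 y (hFS hy)
      change x - 1 = y - 1 at hxy; omega
    have hbessel := he.sum_inner_products_le (s := F') s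
    have hsum : ∑ j ∈ F', ‖⟪e (j + 1), s⟫‖ ^ 2 = n * a ^ 2 := by
      rw [Finset.sum_congr rfl (fun j hj => ?_), Finset.sum_const, hF'card,
        nsmul_eq_mul]
      · obtain ⟨x, hx, rfl⟩ := Finset.mem_image.mp hj
        have h2 := hS2 x (hFS hx)
        have hxx : (fun y => y - 1) x + 1 = x := by simp only []; omega
        rw [hxx, hinner x (hFS hx), Real.norm_eq_abs, sq_abs]
    rw [hsum] at hbessel
    have : ‖s‖ ^ 2 / a ^ 2 ≥ n := by
      rw [ge_iff_le, le_div_iff₀ hapos]; linarith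
    linarith
  -- s = 0
  have hs0 : s = 0 := by
    have hker : (Submodule.span ℝ (e '' S) : Set H) ⊆ {x | ⟪x, s⟫ = 0} := by
      intro x hx
      refine Submodule.span_induction (p := fun x _ => ⟪x, s⟫ = 0) ?_ ?_ ?_ ?_ hx
      · rintro y ⟨i, hiS, rfl⟩
        rw [hinner i hiS, ha0]
      · simp
      · intro y z _ _ hy hz; rw [inner_add_left, hy, hz, add_zero]
      · intro r y _ hy; rw [real_inner_smul_left, hy, mul_zero]
    have hclosed : IsClosed {x : H | ⟪x, s⟫ = 0} := by
      have : {x : H | ⟪x, s⟫ = 0} = (innerSL ℝ s) ⁻¹' {0} := by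
        ext x; simp [real_inner_comm]
      rw [this]
      exact IsClosed.preimage (innerSL ℝ s).continuous isClosed_singleton
    have : ⟪s, s⟫ = 0 := hclosed.closure_subset_iff.mpr hker hmem
    exact inner_self_eq_zero.mp this
  obtain ⟨i, hiS⟩ := hSinf.nonempty
  have := hnorm i hiS
  rw [hs0, sub_zero, hunit i hiS] at this
  simp only [hc, hs0, norm_zero, add_zero] at this
  have h2 : Real.sqrt 2 = 2 := by linarith
  have : Real.sqrt 2 < 2 := by
    nlinarith [Real.sq_sqrt (by norm_num : (2:ℝ) ≥ 0), Real.sqrt_nonneg 2]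
  linarith
end

section
/- Let (e i)_{i ≥ 1} be an orthonormal family in H whose linear span is dense (an orthonormal basis). Then for every infinite subset S ⊆ {2, 3, 4, …} there is no pair (s, t) with ‖s‖ = 1, s in the closed linear span of {e i : i ∈ S}, and π/2 = t + arccos⟨e i, s⟩ for all i ∈ S. (The truncated sound ranging problem on the unit sphere with geodesic distance d(x, y) = arccos⟨x, y⟩, with arrival times generated by the source e 1 emitting at time 0, has no solution on the unit sphere of the closed span of the kept sensors.) -/
open RealInnerProductSpace

/-- The truncated sound ranging problem on the unit sphere with geodesic distance
`d(x, y) = arccos ⟪x, y⟫`, keeping only the sensors `{e i : i ∈ S}` with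
`S ⊆ {2, 3, ...}` infinite, with arrival times generated by the source `e 1`
emitting at time `0`, has no solution on the unit sphere of the closed span of
the kept sensors. -/
theorem srp_sphere_truncated_no_solution
    {H : Type*} [NormedAddCommGroup H] [InnerProductSpace ℝ H] [CompleteSpace H]
    (e : ℕ → H)
    (he : Orthonormal ℝ (fun i : ℕ => e (i + 1)))
    (hdense : Dense (Submodule.span ℝ (Set.range fun i : ℕ => e (i + 1)) : Set H))
    (S : Set ℕ) (hS2 : ∀ i ∈ S, 2 ≤ i) (hSinf : S.Infinite) :
    ¬ ∃ (s : H) (t : ℝ),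
        ‖s‖ = 1 ∧
        s ∈ closure (Submodule.span ℝ (e '' S) : Set H) ∧
        ∀ i ∈ S, Real.pi / 2 = t + Real.arccos ⟪e i, s⟫ := by
  classical
  rintro ⟨s, t, hnorm, hmem, htime⟩
  -- orthonormal family indexed by S
  have hON : Orthonormal ℝ (fun i : S => e ((i : ℕ) - 1 + 1)) := by
    apply he.comp (fun i : S => (i : ℕ) - 1)
    intro i j hij
    have hi := hS2 i i.2
    have hj := hS2 j j.2
    have h : (i : ℕ) - 1 = (j : ℕ) - 1 := hij
    ext
    omega
  have hONe : Orthonormal ℝ (fun i : S => e (i : ℕ)) := by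
    convert hON using 2 with i
    have := hS2 i i.2
    congr 1
    omega
  have hnorme : ∀ i ∈ S, ‖e i‖ = 1 := fun i hi => hONe.1 ⟨i, hi⟩
  set c : ℝ := Real.cos (Real.pi / 2 - t) with hc
  have hinner : ∀ i ∈ S, ⟪e i, s⟫ = c := by
    intro i hi
    have habs : |⟪e i, s⟫| ≤ 1 := by
      calc |⟪e i, s⟫| ≤ ‖e i‖ * ‖s‖ := abs_real_inner_le_norm _ _
        _ = 1 := by rw [hnorme i hi, hnorm, one_mul]
    have h1 := htime i hi
    have : Real.arccos ⟪e i, s⟫ = Real.pi / 2 - t := by linarith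
    calc ⟪e i, s⟫ = Real.cos (Real.arccos ⟪e i, s⟫) :=
          (Real.cos_arccos (by linarith [abs_le.mp habs]) (by linarith [abs_le.mp habs])).symm
      _ = c := by rw [this]
  -- c = 0 by Bessel
  have hc0 : c = 0 := by
    by_contra hne
    obtain ⟨n, hn⟩ := exists_nat_gt (1 / c ^ 2)
    obtain ⟨T, hTS, hTcard⟩ := hSinf.exists_subset_card_eq n
    have hT' : ∀ i ∈ T, i ∈ S := fun i hi => hTS hi
    set T' : Finset S := T.attach.map
      ⟨fun i => (⟨i.1, hT' i.1 i.2⟩ : S), by intro a b hab; simp only [Subtype.mk.injEq] at hab; exact Subtype.ext hab⟩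
    have hcard' : T'.card = n := by simp [T', hTcard]
    have hbessel := hONe.sum_inner_products_le (s := T') s
    rw [hnorm] at hbessel
    have hsum : ∑ i ∈ T', ‖⟪e (i : ℕ), s⟫‖ ^ 2 = n * c ^ 2 := by
      rw [Finset.sum_congr rfl fun i _ => by
        rw [hinner (i : ℕ) i.2, Real.norm_eq_abs, sq_abs]]
      rw [Finset.sum_const, hcard', nsmul_eq_mul]
    rw [hsum] at hbessel
    have hcpos : 0 < c ^ 2 := by positivity
    have : (1 : ℝ) < n * c ^ 2 := by
      rw [div_lt_iff₀ hcpos] at hn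
      linarith
    linarith
  -- s is orthogonal to itself
  have hle : (Submodule.span ℝ (e '' S) : Set H) ⊆ ((ℝ ∙ s)ᗮ : Set H) := by
    apply Submodule.span_le.mpr
    rintro x ⟨i, hi, rfl⟩
    exact Submodule.mem_orthogonal_singleton_iff_inner_left.mpr (by rw [hinner i hi, hc0])
  have hclosed : IsClosed ((ℝ ∙ s)ᗮ : Set H) := (ℝ ∙ s).isClosed_orthogonal
  have hs : s ∈ ((ℝ ∙ s)ᗮ : Set H) := closure_minimal hle hclosed hmem
  have : ⟪s, s⟫ = 0 := Submodule.mem_orthogonal_singleton_iff_inner_left.mp hs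
  rw [real_inner_self_eq_norm_sq, hnorm] at this
  norm_num at this
end

section
/- For any vectors x, y, z in a real inner product space with ‖x‖ = ‖y‖ = ‖z‖ = 1, the inequality ⟨x, y⟩² + ⟨y, z⟩² + ⟨x, z⟩² ≤ 1 + 2·⟨x, y⟩·⟨y, z⟩·⟨x, z⟩ holds. -/
open RealInnerProductSpace

/-- For unit vectors `x, y, z` in a real inner product space,
`⟪x,y⟫² + ⟪y,z⟫² + ⟪x,z⟫² ≤ 1 + 2 ⟪x,y⟫ ⟪y,z⟫ ⟪x,z⟫`. -/
theorem triple_inner_inequality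
    {V : Type*} [NormedAddCommGroup V] [InnerProductSpace ℝ V]
    (x y z : V) (hx : ‖x‖ = 1) (hy : ‖y‖ = 1) (hz : ‖z‖ = 1) :
    ⟪x, y⟫ ^ 2 + ⟪y, z⟫ ^ 2 + ⟪x, z⟫ ^ 2 ≤
      1 + 2 * (⟪x, y⟫ * ⟪y, z⟫ * ⟪x, z⟫) := by
  have hxx : ⟪x, x⟫ = 1 := by rw [real_inner_self_eq_norm_sq, hx]; norm_num
  have hyy : ⟪y, y⟫ = 1 := by rw [real_inner_self_eq_norm_sq, hy]; norm_num
  have hzz : ⟪z, z⟫ = 1 := by rw [real_inner_self_eq_norm_sq, hz]; norm_num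
  have h := real_inner_mul_inner_self_le (y - ⟪x, y⟫ • x) (z - ⟪x, z⟫ • x)
  simp only [inner_sub_left, inner_sub_right, real_inner_smul_left,
    real_inner_smul_right, hxx, hyy, hzz, real_inner_comm x y,
    real_inner_comm x z, real_inner_comm y z] at h
  nlinarith [h]
end

section
/- Let R ⊆ H be a set of sensors, let u lie in the closure of the linear span of R, let h and w be unit vectors each orthogonal to every element of R and with ⟨h, w⟩ = 0, and let ρ > 0. Define s(φ) = u + ρ·(cos φ · h + sin φ · w) for φ ∈ ℝ. Then for every r ∈ R and every φ ∈ ℝ: ‖r − s(φ)‖ = ‖r − (u + ρ·h)‖. Hence if the source u + ρ·h emitting at time t_e produces arrival times t_r = t_e + ‖r − (u + ρ·h)‖, then every pair (s(φ), t_e) is also a solution of the sound ranging problem: a continuum of distinct solutions. -/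
open RealInnerProductSpace

lemma inner_zero_of_closure_span {H : Type*} [NormedAddCommGroup H]
    [InnerProductSpace ℝ H] (R : Set H) (v u : H)
    (hu : u ∈ closure (Submodule.span ℝ R : Set H))
    (hvR : ∀ r ∈ R, ⟪v, r⟫ = 0) : ⟪v, u⟫ = 0 := by
  have hker : (Submodule.span ℝ R : Set H) ⊆ {x | ⟪v, x⟫ = 0} := by
    intro x hx
    have : Submodule.span ℝ R ≤ LinearMap.ker (innerSL ℝ v : H →ₗ[ℝ] ℝ) := by
      rw [Submodule.span_le]
      intro r hr
      simpa using hvR r hr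
    simpa using this hx
  have hclosed : IsClosed {x : H | ⟪v, x⟫ = 0} :=
    isClosed_eq (continuous_const.inner continuous_id) continuous_const
  exact closure_minimal hker hclosed hu

/-- If the source lies off the closed span of the sensors plus two extra
orthogonal directions `h, w`, then rotating the source in the `(h, w)`-plane does
not change its distance to any sensor: a continuum of indistinguishable source
positions. -/
theorem srp_continuum_of_solutions
    {H : Type*} [NormedAddCommGroup H] [InnerProductSpace ℝ H] [CompleteSpace H]
    (R : Set H) (u h w : H)
    (hu : u ∈ closure (Submodule.span ℝ R : Set H))
    (hh : ‖h‖ = 1) (hw : ‖w‖ = 1) (hhw : ⟪h, w⟫ = 0)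
    (hhR : ∀ r ∈ R, ⟪h, r⟫ = 0) (hwR : ∀ r ∈ R, ⟪w, r⟫ = 0)
    (ρ : ℝ) (hρ : 0 < ρ) :
    ∀ r ∈ R, ∀ φ : ℝ,
      ‖r - (u + ρ • (Real.cos φ • h + Real.sin φ • w))‖ = ‖r - (u + ρ • h)‖ := by
  intro r hr φ
  have hhu : ⟪h, u⟫ = 0 := inner_zero_of_closure_span R h u hu hhR
  have hwu : ⟪w, u⟫ = 0 := inner_zero_of_closure_span R w u hu hwR
  have hhx : ⟪h, r - u⟫ = 0 := by
    rw [inner_sub_right, hhR r hr, hhu]; ring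
  have hwx : ⟪w, r - u⟫ = 0 := by
    rw [inner_sub_right, hwR r hr, hwu]; ring
  have hh2 : ⟪h, h⟫ = 1 := by
    rw [real_inner_self_eq_norm_sq, hh]; norm_num
  have hw2 : ⟪w, w⟫ = 1 := by
    rw [real_inner_self_eq_norm_sq, hw]; norm_num
  have key : ∀ c : H, ⟪r - u, c⟫ = 0 → ⟪c, c⟫ = 1 →
      ‖r - (u + ρ • c)‖ ^ 2 = ‖r - u‖ ^ 2 + ρ ^ 2 := by
    intro c hxc hc3
    have hcx : ⟪c, r - u⟫ = 0 := by rw [real_inner_comm]; exact hxc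
    have hrw : r - (u + ρ • c) = (r - u) - ρ • c := by abel
    rw [hrw, ← real_inner_self_eq_norm_sq, ← real_inner_self_eq_norm_sq,
      inner_sub_sub_self]
    simp only [real_inner_smul_left, real_inner_smul_right, hxc, hcx, hc3]
    ring
  have e1 : ‖r - (u + ρ • (Real.cos φ • h + Real.sin φ • w))‖ ^ 2
      = ‖r - u‖ ^ 2 + ρ ^ 2 := by
    apply key
    · have hxh : ⟪r - u, h⟫ = 0 := by rw [real_inner_comm]; exact hhx
      have hxw : ⟪r - u, w⟫ = 0 := by rw [real_inner_comm]; exact hwx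
      simp only [inner_add_right, real_inner_smul_right, hxh, hxw]
      ring
    · have hwh : ⟪w, h⟫ = 0 := by rw [real_inner_comm]; exact hhw
      simp only [inner_add_add_self, real_inner_smul_left, real_inner_smul_right,
        hh2, hw2, hhw, hwh]
      nlinarith [Real.sin_sq_add_cos_sq φ]
  have e2 : ‖r - (u + ρ • h)‖ ^ 2 = ‖r - u‖ ^ 2 + ρ ^ 2 :=
    key h (by rw [real_inner_comm, hhx]) hh2
  have := e1.trans e2.symm
  have h1 := norm_nonneg (r - (u + ρ • (Real.cos φ • h + Real.sin φ • w)))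
  have h2 := norm_nonneg (r - (u + ρ • h))
  nlinarith [this]
end

section
/- Let R be a set of unit vectors in H, let s₀ with ‖s₀‖ = 1 decompose as s₀ = u₀ + u₁ where u₀ lies in the closure of the linear span of R, u₁ is orthogonal to every element of R and u₁ ≠ 0, and let u₂ be a unit vector orthogonal to every element of R and to u₁. Define s(φ) = u₀ + ‖u₁‖·(cos φ · (u₁/‖u₁‖) + sin φ · u₂) for φ ∈ ℝ. Then for every φ: ‖s(φ)‖ = 1 and for every r ∈ R, ⟨r, s(φ)⟩ = ⟨r, s₀⟩, hence arccos⟨r, s(φ)⟩ = arccos⟨r, s₀⟩; so the sound ranging problem on the unit sphere with geodesic distance d(x, y) = arccos⟨x, y⟩ has a continuum of solutions s(φ). -/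
open RealInnerProductSpace

lemma aux_orth_closure {H : Type*} [NormedAddCommGroup H] [InnerProductSpace ℝ H]
    (R : Set H) (v u : H) (hv : ∀ r ∈ R, ⟪r, v⟫ = 0)
    (hu : u ∈ closure (Submodule.span ℝ R : Set H)) : ⟪u, v⟫ = 0 := by
  have hsub : closure (Submodule.span ℝ R : Set H) ⊆ {x | ⟪x, v⟫ = 0} := by
    apply closure_minimal
    · intro x hx
      induction hx using Submodule.span_induction with
      | mem x hx => exact hv x hx
      | zero => simp
      | add x y _ _ hx hy =>
          simp only [Set.mem_setOf_eq] at hx hy ⊢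
          rw [inner_add_left, hx, hy, add_zero]
      | smul c x _ hx =>
          simp only [Set.mem_setOf_eq] at hx ⊢
          rw [real_inner_smul_left, hx, mul_zero]
    · exact isClosed_eq (Continuous.inner continuous_id continuous_const) continuous_const
  exact hsub hu

/-- On the unit sphere with geodesic distance: if the source `s₀ = u₀ + u₁` has a
nonzero component `u₁` orthogonal to all sensors, and `u₂` is a unit vector
orthogonal to all sensors and to `u₁`, then rotating in the `(u₁, u₂)`-plane
yields a continuum of unit vectors at the same geodesic distance from every
sensor. -/
theorem srp_sphere_continuum_of_solutions
    {H : Type*} [NormedAddCommGroup H] [InnerProductSpace ℝ H] [CompleteSpace H]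
    (R : Set H) (hR : ∀ r ∈ R, ‖r‖ = 1)
    (s₀ u₀ u₁ u₂ : H)
    (hs₀ : s₀ = u₀ + u₁) (hs₀norm : ‖s₀‖ = 1)
    (hu₀ : u₀ ∈ closure (Submodule.span ℝ R : Set H))
    (hu₁R : ∀ r ∈ R, ⟪r, u₁⟫ = 0) (hu₁ : u₁ ≠ 0)
    (hu₂ : ‖u₂‖ = 1) (hu₂R : ∀ r ∈ R, ⟪r, u₂⟫ = 0) (hu₁₂ : ⟪u₁, u₂⟫ = 0) :
    ∀ φ : ℝ,
      ‖u₀ + ‖u₁‖ • (Real.cos φ • (‖u₁‖⁻¹ • u₁) + Real.sin φ • u₂)‖ = 1 ∧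
      ∀ r ∈ R,
        ⟪r, u₀ + ‖u₁‖ • (Real.cos φ • (‖u₁‖⁻¹ • u₁) + Real.sin φ • u₂)⟫ = ⟪r, s₀⟫ ∧
        Real.arccos ⟪r, u₀ + ‖u₁‖ • (Real.cos φ • (‖u₁‖⁻¹ • u₁) + Real.sin φ • u₂)⟫
          = Real.arccos ⟪r, s₀⟫ := by
  intro φ
  have h01 : ⟪u₀, u₁⟫ = 0 := aux_orth_closure R u₁ u₀ hu₁R hu₀
  have h02 : ⟪u₀, u₂⟫ = 0 := aux_orth_closure R u₂ u₀ hu₂R hu₀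
  have hn1 : ‖u₁‖ ≠ 0 := norm_ne_zero_iff.mpr hu₁
  set e : H := ‖u₁‖⁻¹ • u₁ with he
  have h0e : ⟪u₀, e⟫ = 0 := by rw [he, real_inner_smul_right, h01, mul_zero]
  have he2 : ⟪e, u₂⟫ = 0 := by rw [he, real_inner_smul_left, hu₁₂, mul_zero]
  have hRe : ∀ r ∈ R, ⟪r, e⟫ = 0 := fun r hr => by
    rw [he, real_inner_smul_right, hu₁R r hr, mul_zero]
  have hne : ‖e‖ = 1 := by
    rw [he, norm_smul, norm_inv, norm_norm, inv_mul_cancel₀ hn1]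
  have heu : ‖u₁‖ • e = u₁ := by rw [he, smul_smul, mul_inv_cancel₀ hn1, one_smul]
  clear_value e
  set v : H := Real.cos φ • e + Real.sin φ • u₂ with hv
  clear_value v
  have hev : ⟪Real.cos φ • e, Real.sin φ • u₂⟫ = 0 := by
    rw [real_inner_smul_left, real_inner_smul_right, he2]; ring
  have hnv : ‖v‖ = 1 := by
    have : ‖v‖ ^ 2 = 1 := by
      rw [hv, norm_add_sq_real, hev, norm_smul, norm_smul, hne, hu₂]
      simp only [Real.norm_eq_abs, mul_one, one_pow, mul_pow, sq_abs]
      nlinarith [Real.sin_sq_add_cos_sq φ]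
    nlinarith [norm_nonneg v]
  set w : H := ‖u₁‖ • v with hw
  clear_value w
  have hnw : ‖w‖ = ‖u₁‖ := by
    rw [hw, norm_smul, hnv, norm_norm, mul_one]
  have h0w : ⟪u₀, w⟫ = 0 := by
    rw [hw, real_inner_smul_right, hv, inner_add_right, real_inner_smul_right,
      real_inner_smul_right, h0e, h02]
    ring
  have hs : ‖u₀‖ ^ 2 + ‖u₁‖ ^ 2 = 1 := by
    have h : ‖s₀‖ ^ 2 = ‖u₀‖ ^ 2 + ‖u₁‖ ^ 2 := by
      rw [hs₀, norm_add_sq_real, h01]; ring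
    rw [hs₀norm] at h; linarith
  have hnorm : ‖u₀ + w‖ = 1 := by
    have hsq : ‖u₀ + w‖ ^ 2 = 1 := by
      rw [norm_add_sq_real, h0w, hnw]; linarith
    nlinarith [norm_nonneg (u₀ + w)]
  refine ⟨hnorm, fun r hr => ?_⟩
  have hinner : ⟪r, u₀ + w⟫ = ⟪r, s₀⟫ := by
    rw [hs₀, inner_add_right, inner_add_right, hw, real_inner_smul_right, hv,
      inner_add_right, real_inner_smul_right, real_inner_smul_right,
      hRe r hr, hu₂R r hr, hu₁R r hr]
    ring
  exact ⟨hinner, by rw [hinner]⟩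
end

section
/- Let b, c : ℕ → ℝ be real sequences such that Σⱼ bⱼ² diverges, and let z₀ ∈ ℝ be such that the series Σⱼ (cⱼ + z₀·bⱼ)² converges with sum equal to 1. Then the sequence zₙ = −(Σ_{j=1}^{n} bⱼ·cⱼ) / (Σ_{j=1}^{n} bⱼ²) (defined for all n with Σ_{j=1}^{n} bⱼ² > 0) converges to z₀ as n → ∞. -/
/-- Subcase 1a: if `Σ bⱼ²` diverges and `Σ (cⱼ + z₀ bⱼ)² = 1`, then the vertices
`zₙ = -(Σ_{j<n} bⱼ cⱼ)/(Σ_{j<n} bⱼ²)` of the partial-sum quadratics converge to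
`z₀`. -/
theorem subcase1a_vertex_converges
    (b c : ℕ → ℝ) (hb : ¬ Summable (fun j => (b j) ^ 2))
    (z₀ : ℝ) (h₀ : HasSum (fun j => (c j + z₀ * b j) ^ 2) 1) :
    Filter.Tendsto
      (fun n : ℕ =>
        -(∑ j ∈ Finset.range n, b j * c j) / (∑ j ∈ Finset.range n, (b j) ^ 2))
      Filter.atTop (nhds z₀) := by
  set d : ℕ → ℝ := fun j => c j + z₀ * b j with hd
  set B : ℕ → ℝ := fun n => ∑ j ∈ Finset.range n, (b j) ^ 2 with hB
  set S : ℕ → ℝ := fun n => ∑ j ∈ Finset.range n, b j * d j with hS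
  have hBmono : Monotone B := fun m n hmn =>
    Finset.sum_le_sum_of_subset_of_nonneg (Finset.range_subset_range.mpr hmn)
      (fun i _ _ => sq_nonneg _)
  have hBtop : Filter.Tendsto B Filter.atTop Filter.atTop := by
    have := (not_summable_iff_tendsto_nat_atTop_of_nonneg
      (fun j => sq_nonneg (b j))).mp hb
    exact this
  -- partial sums of d² are ≤ 1
  have hd1 : ∀ n, ∑ j ∈ Finset.range n, (d j) ^ 2 ≤ 1 := fun n =>
    sum_le_hasSum (Finset.range n) (fun i _ => sq_nonneg _) h₀
  -- Cauchy-Schwarz bound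
  have hCS : ∀ n, |S n| ≤ Real.sqrt (B n) := by
    intro n
    have h2 : (S n) ^ 2 ≤ B n * 1 := by
      calc (S n) ^ 2 ≤ (∑ j ∈ Finset.range n, (b j) ^ 2) *
            ∑ j ∈ Finset.range n, (d j) ^ 2 :=
            Finset.sum_mul_sq_le_sq_mul_sq _ _ _
        _ ≤ B n * 1 := by
            have := hd1 n
            have hBnn : 0 ≤ B n := Finset.sum_nonneg fun i _ => sq_nonneg _
            exact mul_le_mul_of_nonneg_left (hd1 n) hBnn
    have := Real.sqrt_le_sqrt (by linarith : (S n)^2 ≤ B n)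
    rwa [Real.sqrt_sq_eq_abs] at this
  have hev : ∀ᶠ n in Filter.atTop, (1:ℝ) ≤ B n := hBtop.eventually_ge_atTop 1
  -- the difference from z₀
  have hkey : ∀ᶠ n in Filter.atTop,
      ‖(-(∑ j ∈ Finset.range n, b j * c j) / B n) - z₀‖ ≤ (Real.sqrt (B n))⁻¹ := by
    filter_upwards [hev] with n hn
    have hBpos : 0 < B n := lt_of_lt_of_le one_pos hn
    have hCeq : ∑ j ∈ Finset.range n, b j * c j = S n - z₀ * B n := by
      simp only [hS, hB, hd, Finset.mul_sum]
      rw [← Finset.sum_sub_distrib]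
      exact Finset.sum_congr rfl fun i _ => by ring
    rw [hCeq]
    have : -(S n - z₀ * B n) / B n - z₀ = -(S n / B n) := by
      field_simp
      ring
    rw [this, norm_neg, Real.norm_eq_abs, abs_div, abs_of_pos hBpos]
    rw [div_le_iff₀ hBpos]
    have hsq : Real.sqrt (B n) * Real.sqrt (B n) = B n :=
      Real.mul_self_sqrt hBpos.le
    have hsqpos : 0 < Real.sqrt (B n) := Real.sqrt_pos.mpr hBpos
    calc |S n| ≤ Real.sqrt (B n) := hCS n
      _ = (Real.sqrt (B n))⁻¹ * B n := by
          field_simp [hsq]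
          exact Real.sq_sqrt hBpos.le
  have hsqrt_top : Filter.Tendsto (fun n => Real.sqrt (B n)) Filter.atTop Filter.atTop := by
    rw [Filter.tendsto_atTop]
    intro y
    filter_upwards [hBtop.eventually_ge_atTop (y ^ 2)] with n hn
    rcases le_or_gt y 0 with hy | hy
    · exact hy.trans (Real.sqrt_nonneg _)
    · exact (Real.le_sqrt' hy).mpr hn
  have hzero : Filter.Tendsto (fun n => (Real.sqrt (B n))⁻¹) Filter.atTop (nhds 0) :=
    hsqrt_top.inv_tendsto_atTop
  have := squeeze_zero_norm' hkey hzero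
  exact tendsto_sub_nhds_zero_iff.mp this
end

section
/- Let p, q : ℕ → ℝ be real sequences such that the series Σⱼ pⱼ² diverges, and let t', t'' ∈ ℝ with sin(t' − t'') ≠ 0. Then it is impossible that both series Σⱼ (pⱼ·cos t' + qⱼ·sin t')² and Σⱼ (pⱼ·cos t'' + qⱼ·sin t'')² converge. (In Case 2 of sound ranging on the sphere, at most one emission time in an interval of length ≤ π makes the master series converge.) -/
/-- Case 2 on the sphere: if `Σ pⱼ²` diverges and `sin (t' - t'')  ≠ 0`, then the
master series cannot converge at both `t'` and `t''`. -/
theorem sphere_case2_unique_t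
    (p q : ℕ → ℝ) (hp : ¬ Summable (fun j => (p j) ^ 2))
    (t' t'' : ℝ) (hsin : Real.sin (t' - t'') ≠ 0) :
    ¬ (Summable (fun j => (p j * Real.cos t' + q j * Real.sin t') ^ 2) ∧
       Summable (fun j => (p j * Real.cos t'' + q j * Real.sin t'') ^ 2)) := by
  rintro ⟨h1, h2⟩
  apply hp
  set s := Real.sin (t' - t'') with hs
  have key : ∀ j, p j = (Real.sin t' * (p j * Real.cos t'' + q j * Real.sin t'')
      - Real.sin t'' * (p j * Real.cos t' + q j * Real.sin t')) / s := by
    intro j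
    rw [eq_div_iff hsin, hs, Real.sin_sub]
    ring
  have hsum : Summable (fun j =>
      2 * (Real.sin t' / s) ^ 2 * (p j * Real.cos t'' + q j * Real.sin t'') ^ 2
      + 2 * (Real.sin t'' / s) ^ 2 * (p j * Real.cos t' + q j * Real.sin t') ^ 2) :=
    ((h2.mul_left _).add (h1.mul_left _))
  refine hsum.of_nonneg_of_le (fun j => sq_nonneg _) (fun j => ?_)
  set A := p j * Real.cos t'' + q j * Real.sin t'' with hA
  set B := p j * Real.cos t' + q j * Real.sin t' with hB
  rw [key j]
  have : (Real.sin t' * (p j * Real.cos t'' + q j * Real.sin t'')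
      - Real.sin t'' * (p j * Real.cos t' + q j * Real.sin t')) / s
      = (Real.sin t' / s) * A - (Real.sin t'' / s) * B := by ring
  rw [this]
  nlinarith [sq_nonneg ((Real.sin t' / s) * A + (Real.sin t'' / s) * B)]
end
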